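/- arXiv:2504.17535 — 3 statements merged into one kernel-verified Lean document; each statement's English description precedes it below -/
import Mathlib

section
/- Let r ≥ 2 be an integer. On the set Fin r × Fin 2, define involutions ρ₀,…,ρ_{r−1} ∈ Sym(Fin r × Fin 2) by: ρ₀ := the transposition swapping (0,0) and (0,1); and for 1 ≤ i ≤ r−1, ρᵢ(x, ε) := ((i−1 i)(x), ε) (i.e. ρᵢ = Equiv.prodCongr (Equiv.swap (i−1) i) (Equiv.refl (Fin 2))). Then the family (ρ₀,…,ρ_{r−1}) satisfies the string property and the intersection property, and the generated subgroup is exactly the full stabilizer of the block system with blocks {x} × Fin 2: ⟨ρ₀,…,ρ_{r−1}⟩ = { σ ∈ Sym(Fin r × Fin 2) : ∃ π ∈ Sym(Fin r), ∀ x ε, (σ (x, ε)).1 = π x } (a group isomorphic to the wreath product C₂ ≀ S_r, of order 2^r · r!). -/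
namespace WreathAux

/-- `x` and `y` are connected by the edges indexed in `I` (edge `k` joins `k-1` and `k`). -/
def conn {r : ℕ} (I : Set (Fin r)) (a b : Fin r) : Prop :=
  ∀ k : Fin r, min a.1 b.1 < k.1 → k.1 ≤ max a.1 b.1 → k ∈ I

lemma conn_refl {r : ℕ} (I : Set (Fin r)) (a : Fin r) : conn I a a := by
  intro k h1 h2; omega

lemma conn_symm {r : ℕ} {I : Set (Fin r)} {a b : Fin r} (h : conn I a b) : conn I b a := by
  intro k h1 h2; exact h k (by omega) (by omega)

lemma conn_trans {r : ℕ} {I : Set (Fin r)} {a b c : Fin r}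
    (h1 : conn I a b) (h2 : conn I b c) : conn I a c := by
  intro k hk1 hk2
  rcases (by omega : (min a.1 b.1 < k.1 ∧ k.1 ≤ max a.1 b.1) ∨
      (min b.1 c.1 < k.1 ∧ k.1 ≤ max b.1 c.1)) with ⟨u, v⟩ | ⟨u, v⟩
  · exact h1 k u v
  · exact h2 k u v

lemma conn_inter {r : ℕ} {I J : Set (Fin r)} {a b : Fin r} :
    conn (I ∩ J) a b ↔ conn I a b ∧ conn J a b := by
  constructor
  · exact fun h => ⟨fun k h1 h2 => (h k h1 h2).1, fun k h1 h2 => (h k h1 h2).2⟩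
  · exact fun ⟨hI, hJ⟩ k h1 h2 => ⟨hI k h1 h2, hJ k h1 h2⟩

lemma conn_mono {r : ℕ} {I J : Set (Fin r)} (hIJ : I ⊆ J) {a b : Fin r}
    (h : conn I a b) : conn J a b := fun k h1 h2 => hIJ (h k h1 h2)

lemma commute_swap_of_fixes {α : Type*} [DecidableEq α] (f : Equiv.Perm α) (a b : α)
    (ha : f a = a) (hb : f b = b) : Commute (Equiv.swap a b) f := by
  have := Equiv.swap_apply_apply f a b
  rw [ha, hb] at this
  unfold Commute SemiconjBy
  conv_lhs => rw [this]
  group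


section K

variable {r : ℕ} (hr : 0 < r)

/-- the block map of a block-preserving permutation -/
abbrev bm (σ : Equiv.Perm (Fin r × Fin 2)) (x : Fin r) : Fin r := (σ (x, 0)).1

lemma eta_apply (σ : Equiv.Perm (Fin r × Fin 2)) (x : Fin r) (ε : Fin 2) :
    σ (x, ε) = ((σ (x, ε)).1, (σ (x, ε)).2) := rfl

lemma snd_ne (σ : Equiv.Perm (Fin r × Fin 2))
    (hA : ∀ x ε, (σ (x, ε)).1 = (σ (x, 0)).1) (x : Fin r) :
    (σ (x, 0)).2 ≠ (σ (x, 1)).2 := by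
  intro h
  have h2 : σ (x, 0) = σ (x, 1) := by
    rw [eta_apply σ x 0, eta_apply σ x 1, hA x 1, h]
  have := σ.injective h2
  simp at this

lemma bm_inj (σ : Equiv.Perm (Fin r × Fin 2))
    (hA : ∀ x ε, (σ (x, ε)).1 = (σ (x, 0)).1) : Function.Injective (bm σ) := by
  intro a a' h
  have s1 := snd_ne σ hA a
  have s2 := snd_ne σ hA a'
  have key : (σ (a', 0)).2 = (σ (a, 0)).2 ∨ (σ (a', 1)).2 = (σ (a, 0)).2 := by
    omega
  have h' : (σ (a, 0)).1 = (σ (a', 0)).1 := h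
  rcases key with hk | hk
  · have heq : σ (a', 0) = σ (a, 0) := by
      rw [eta_apply σ a' 0, eta_apply σ a 0, hk, ← h']
    have := (Prod.ext_iff.mp (σ.injective heq)).1
    exact this.symm
  · have heq : σ (a', 1) = σ (a, 0) := by
      rw [eta_apply σ a' 1, eta_apply σ a 0, hk, hA a' 1, ← h']
    have := (Prod.ext_iff.mp (σ.injective heq)).1
    exact this.symm

lemma bm_surj (σ : Equiv.Perm (Fin r × Fin 2))
    (hA : ∀ x ε, (σ (x, ε)).1 = (σ (x, 0)).1) : Function.Surjective (bm σ) :=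
  Finite.surjective_of_injective (bm_inj σ hA)

/-- The subgroup of permutations of `Fin r × Fin 2` that permute the blocks along
`I`-connections and only flip blocks connected to `0` when `0 ∈ I`. -/
def K (I : Set (Fin r)) : Subgroup (Equiv.Perm (Fin r × Fin 2)) where
  carrier := {σ | (∀ x ε, (σ (x, ε)).1 = (σ (x, 0)).1) ∧
    (∀ x, conn I x (σ (x, 0)).1) ∧
    (∀ x, (σ (x, 0)).2 = 1 → (⟨0, hr⟩ : Fin r) ∈ I ∧ conn I x ⟨0, hr⟩)}
  one_mem' := by
    refine ⟨fun x ε => rfl, fun x => conn_refl I x, fun x h => ?_⟩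
    simp [Equiv.Perm.one_apply] at h
  mul_mem' := by
    rintro σ τ ⟨hA, hB, hC⟩ ⟨hA', hB', hC'⟩
    have key : ∀ x ε, (σ * τ) (x, ε) = σ ((τ (x, 0)).1, (τ (x, ε)).2) := by
      intro x ε
      rw [Equiv.Perm.mul_apply, eta_apply τ x ε, hA' x ε]
    refine ⟨fun x ε => ?_, fun x => ?_, fun x h => ?_⟩
    · rw [key x ε, key x 0, hA _ (τ (x, ε)).2, hA _ (τ (x, 0)).2]
    · rw [key x 0, hA _ (τ (x, 0)).2]
      exact conn_trans (hB' x) (hB _)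
    · rw [key x 0] at h
      have h2 : (τ (x, 0)).2 = 0 ∨ (τ (x, 0)).2 = 1 := by omega
      rcases h2 with h2 | h2
      · rw [h2] at h
        obtain ⟨hI0, hc⟩ := hC _ h
        exact ⟨hI0, conn_trans (hB' x) hc⟩
      · exact hC' x h2
  inv_mem' := by
    rintro σ ⟨hA, hB, hC⟩
    have hbm : ∀ (x : Fin r) (ε : Fin 2), (σ ((σ⁻¹ (x, ε)).1, 0)).1 = x := by
      intro x ε
      have h1 : σ ((σ⁻¹ (x, ε)).1, (σ⁻¹ (x, ε)).2) = (x, ε) := by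
        rw [← eta_apply]; simp
      have := hA (σ⁻¹ (x, ε)).1 (σ⁻¹ (x, ε)).2
      rw [h1] at this
      exact this.symm
    refine ⟨fun x ε => ?_, fun x => ?_, fun x h => ?_⟩
    · exact bm_inj σ hA (show (σ ((σ⁻¹ (x, ε)).1, 0)).1 = (σ ((σ⁻¹ (x, 0)).1, 0)).1 by rw [hbm x ε, hbm x 0])
    · have := hB (σ⁻¹ (x, 0)).1
      rw [hbm x 0] at this
      exact conn_symm this
    · -- σ⁻¹ (x,0) = (a, 1) with bm σ a = x
      set a := (σ⁻¹ (x, 0)).1 with ha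
      have h1 : σ (a, 1) = (x, 0) := by
        have : σ ((σ⁻¹ (x, 0)).1, (σ⁻¹ (x, 0)).2) = (x, 0) := by
          rw [← eta_apply]; simp
        rwa [h, ← ha] at this
      have h2 : (σ (a, 0)).2 = 1 := by
        have hne := snd_ne σ hA a
        rw [h1] at hne
        simp only [ne_eq] at hne
        omega
      obtain ⟨hI0, hc⟩ := hC a h2
      refine ⟨hI0, conn_trans ?_ hc⟩
      have := hB a
      have hax : (σ (a, 0)).1 = x := by
        have := hbm x 0; rwa [← ha] at this
      rw [hax] at this
      exact conn_symm this

end K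


section Young

variable {r : ℕ}

/-- adjacent transpositions indexed by `I` -/
def edgeSwaps (I : Set (Fin r)) : Set (Equiv.Perm (Fin r)) :=
  {e | ∃ k : Fin r, k ∈ I ∧ 1 ≤ k.1 ∧ e = Equiv.swap ⟨k.1 - 1, Nat.lt_of_le_of_lt (Nat.sub_le _ _) k.isLt⟩ k}

lemma conn_of_mem_edge {I : Set (Fin r)} {e : Equiv.Perm (Fin r)} (he : e ∈ edgeSwaps I)
    (y : Fin r) : conn I y (e y) := by
  obtain ⟨k, hkI, hk1, rfl⟩ := he
  rcases eq_or_ne y ⟨k.1 - 1, by omega⟩ with rfl | h1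
  · rw [Equiv.swap_apply_left]
    intro j hj1 hj2
    have : j = k := by
      apply Fin.ext
      simp at hj1 hj2
      omega
    rwa [this]
  · rcases eq_or_ne y k with rfl | h2
    · rw [Equiv.swap_apply_right]
      intro j hj1 hj2
      have : j = y := by
        apply Fin.ext
        simp at hj1 hj2
        omega
      rwa [this]
    · rw [Equiv.swap_apply_of_ne_of_ne h1 h2]
      exact conn_refl I y

lemma conn_of_mem_C {I : Set (Fin r)} {π : Equiv.Perm (Fin r)}
    (hπ : π ∈ Subgroup.closure (edgeSwaps I)) (y : Fin r) : conn I y (π y) := by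
  induction hπ using Subgroup.closure_induction generalizing y with
  | mem e he => exact conn_of_mem_edge he y
  | one => exact conn_refl I y
  | mul σ τ hσ hτ ihσ ihτ =>
    exact conn_trans (ihτ y) (ihσ (τ y))
  | inv σ hσ ihσ =>
    have := ihσ (σ⁻¹ y)
    simp only [Equiv.Perm.inv_def, Equiv.apply_symm_apply] at this
    exact conn_symm this

lemma chain_mem {I : Set (Fin r)} :
    ∀ (m : ℕ) (x z : Fin r), x.1 ≤ z.1 → z.1 - x.1 = m → conn I x z →
      ∃ c ∈ Subgroup.closure (edgeSwaps I), c x = z ∧ ∀ y : Fin r, y.1 < x.1 → c y = y := by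
  intro m
  induction m with
  | zero =>
    intro x z hxz hm _
    have : x = z := Fin.ext (by omega)
    exact ⟨1, one_mem _, by simp [this], fun y _ => rfl⟩
  | succ m ih =>
    intro x z hxz hm hconn
    have hz1 : 1 ≤ z.1 := by omega
    set z' : Fin r := ⟨z.1 - 1, by omega⟩ with hz'
    have hconn' : conn I x z' := by
      intro k h1 h2
      exact hconn k (by simp [hz'] at h1 ⊢; omega) (by simp [hz'] at h2 ⊢; omega)
    obtain ⟨c', hc'mem, hc'x, hc'fix⟩ := ih x z' (by simp [hz']; omega) (by simp [hz']; omega) hconn'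
    have hswap : Equiv.swap z' z ∈ edgeSwaps I := by
      refine ⟨z, hconn z (by omega) (by omega), hz1, rfl⟩
    refine ⟨Equiv.swap z' z * c', mul_mem (Subgroup.subset_closure hswap) hc'mem, ?_, ?_⟩
    · rw [Equiv.Perm.mul_apply, hc'x, Equiv.swap_apply_left]
    · intro y hy
      rw [Equiv.Perm.mul_apply, hc'fix y hy]
      apply Equiv.swap_apply_of_ne_of_ne
      · intro h; rw [h] at hy; simp [hz'] at hy; omega
      · intro h; rw [h] at hy; omega

lemma young_aux {I : Set (Fin r)} :
    ∀ (m n : ℕ), r ≤ n + m → ∀ π : Equiv.Perm (Fin r),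
      (∀ y, conn I y (π y)) → (∀ y : Fin r, y.1 < n → π y = y) →
      π ∈ Subgroup.closure (edgeSwaps I) := by
  intro m
  induction m with
  | zero =>
    intro n hn π _ hfix
    have : π = 1 := Equiv.ext fun y => hfix y (by omega)
    rw [this]; exact one_mem _
  | succ m ih =>
    intro n hn π hconn hfix
    by_cases hnr : r ≤ n
    · have : π = 1 := Equiv.ext fun y => hfix y (by omega)
      rw [this]; exact one_mem _
    · push_neg at hnr
      set x : Fin r := ⟨n, hnr⟩ with hx
      have hx1 : x.1 = n := rfl
      by_cases hpx : π x = x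
      · refine ih (n + 1) (by omega) π hconn fun y hy => ?_
        rcases Nat.lt_or_ge y.1 n with h | h
        · exact hfix y h
        · have : y = x := Fin.ext (by omega)
          rw [this, hpx]
      · set z : Fin r := π⁻¹ x with hz
        have hπz : π z = x := by simp [hz]
        have hzx : x.1 < z.1 := by
          rcases Nat.lt_trichotomy z.1 x.1 with h | h | h
          · exfalso
            have := hfix z (by omega)
            rw [this] at hπz
            omega
          · exfalso
            have hzxeq : z = x := Fin.ext h
            rw [hzxeq] at hπz
            exact hpx hπz
          · exact h
        have hconnxz : conn I x z := conn_symm (by simpa [hπz] using hconn z)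
        obtain ⟨c, hcmem, hcx, hcfix⟩ := chain_mem (z.1 - x.1) x z (by omega) rfl hconnxz
        have hmem' : π * c ∈ Subgroup.closure (edgeSwaps I) := by
          refine ih (n + 1) (by omega) (π * c) (fun y => ?_) (fun y hy => ?_)
          · exact conn_trans (conn_of_mem_C hcmem y) (hconn (c y))
          · rcases Nat.lt_or_ge y.1 n with h | h
            · rw [Equiv.Perm.mul_apply, hcfix y h, hfix y h]
            · have hyx : y = x := Fin.ext (by omega)
              rw [hyx, Equiv.Perm.mul_apply, hcx, hπz]
        have : π = (π * c) * c⁻¹ := by group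
        rw [this]
        exact mul_mem hmem' (inv_mem hcmem)

lemma young {I : Set (Fin r)} (π : Equiv.Perm (Fin r)) (hconn : ∀ y, conn I y (π y)) :
    π ∈ Subgroup.closure (edgeSwaps I) :=
  young_aux r 0 (by omega) π hconn (fun y hy => by omega)

end Young


section Main

variable {r : ℕ}

/-- the hom embedding `Perm (Fin r)` block-wise -/
def phi (r : ℕ) : Equiv.Perm (Fin r) →* Equiv.Perm (Fin r × Fin 2) where
  toFun π := Equiv.prodCongr π (Equiv.refl _)
  map_one' := by
    apply Equiv.ext
    rintro ⟨x, ε⟩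
    rfl
  map_mul' := fun a b => by
    apply Equiv.ext
    rintro ⟨x, ε⟩
    rfl

lemma phi_apply (π : Equiv.Perm (Fin r)) : phi r π = Equiv.prodCongr π (Equiv.refl _) := rfl

lemma phi_apply_pt (π : Equiv.Perm (Fin r)) (x : Fin r) (ε : Fin 2) :
    phi r π (x, ε) = (π x, ε) := rfl

lemma swap_block_fst (y x : Fin r) (ε : Fin 2) :
    (Equiv.swap ((y, 0) : Fin r × Fin 2) (y, 1) (x, ε)).1 = x := by
  rcases eq_or_ne ((x, ε) : Fin r × Fin 2) (y, 0) with he | he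
  · rw [he, Equiv.swap_apply_left]
    exact (Prod.ext_iff.mp he).1.symm
  · rcases eq_or_ne ((x, ε) : Fin r × Fin 2) (y, 1) with he2 | he2
    · rw [he2, Equiv.swap_apply_right]
      exact (Prod.ext_iff.mp he2).1.symm
    · rw [Equiv.swap_apply_of_ne_of_ne he he2]

variable (hr : 2 ≤ r) (ρ : Fin r → Equiv.Perm (Fin r × Fin 2))
    (h0 : ∀ i : Fin r, (i : ℕ) = 0 →
      ρ i = Equiv.swap (⟨0, Nat.lt_of_lt_of_le (by decide) hr⟩, 0) (⟨0, Nat.lt_of_lt_of_le (by decide) hr⟩, 1))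
    (hpos : ∀ i : Fin r, 1 ≤ (i : ℕ) →
      ρ i = Equiv.prodCongr (Equiv.swap ⟨(i : ℕ) - 1, Nat.lt_of_le_of_lt (Nat.sub_le _ _) i.isLt⟩ ⟨(i : ℕ), i.isLt⟩)
        (Equiv.refl (Fin 2)))

include hr h0 hpos

lemma closure_le_K (I : Set (Fin r)) :
    Subgroup.closure (ρ '' I) ≤ K (show 0 < r from Nat.lt_of_lt_of_le (by decide) hr) I := by
  rw [Subgroup.closure_le]
  rintro σ ⟨i, hiI, rfl⟩
  rcases Nat.eq_zero_or_pos i.1 with hi | hi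
  · rw [h0 i hi]
    have hi0 : i = ⟨0, by omega⟩ := Fin.ext hi
    refine ⟨fun x ε => by rw [swap_block_fst, swap_block_fst], fun x => ?_, fun x h => ?_⟩
    · have := swap_block_fst (r := r) ⟨0, by omega⟩ x 0
      rw [show ((Equiv.swap ((⟨0, by omega⟩ : Fin r), (0 : Fin 2)) (⟨0, by omega⟩, 1)) (x, 0)).1
          = x from this]
      exact conn_refl I x
    · rcases eq_or_ne x ⟨0, by omega⟩ with he | hx
      · exact ⟨hi0 ▸ hiI, by rw [he]; exact conn_refl I _⟩
      · exfalso
        rw [Equiv.swap_apply_of_ne_of_ne (by simp [Prod.ext_iff, Fin.ext_iff]; intro h'; exact hx (Fin.ext h'))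
          (by simp [Prod.ext_iff])] at h
        simp at h
  · rw [hpos i hi]
    have hedge : Equiv.swap (⟨i.1 - 1, by omega⟩ : Fin r) ⟨i.1, i.isLt⟩ ∈ edgeSwaps I := by
      exact ⟨i, hiI, hi, by congr⟩
    refine ⟨fun x ε => rfl, fun x => ?_, fun x h => ?_⟩
    · exact conn_of_mem_edge hedge x
    · simp [Equiv.prodCongr_apply] at h

lemma flip_mem (I : Set (Fin r)) :
    ∀ (m : ℕ) (y : Fin r), y.1 = m → (⟨0, Nat.lt_of_lt_of_le (by decide) hr⟩ : Fin r) ∈ I → conn I y ⟨0, Nat.lt_of_lt_of_le (by decide) hr⟩ →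
      Equiv.swap ((y, 0) : Fin r × Fin 2) (y, 1) ∈ Subgroup.closure (ρ '' I) := by
  intro m
  induction m with
  | zero =>
    intro y hy hI0 _
    have hy0 : y = ⟨0, by omega⟩ := Fin.ext hy
    have : Equiv.swap ((y, 0) : Fin r × Fin 2) (y, 1) = ρ y := by
      rw [h0 y hy, hy0]
    rw [this]
    exact Subgroup.subset_closure ⟨y, hy0 ▸ hI0, rfl⟩
  | succ m ih =>
    intro y hy hI0 hconn
    have hyI : y ∈ I := by
      refine hconn y ?_ ?_
      · simp
        omega
      · simp
    set y' : Fin r := ⟨m, by omega⟩ with hy'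
    have hconn' : conn I y' ⟨0, by omega⟩ := by
      intro k h1 h2
      refine hconn k ?_ ?_ <;> simp [hy'] at h1 h2 ⊢ <;> omega
    have hs' := ih y' rfl hI0 hconn'
    have hρy : ρ y (y', (0 : Fin 2)) = (y, 0) ∧ ρ y (y', (1 : Fin 2)) = (y, 1) := by
      rw [hpos y (by omega)]
      have h1 : (⟨y.1 - 1, by omega⟩ : Fin r) = y' := Fin.ext (by simp [hy']; omega)
      constructor <;>
      · show (Equiv.swap (⟨y.1 - 1, by omega⟩ : Fin r) ⟨y.1, y.isLt⟩ y', _) = _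
        rw [← h1, Equiv.swap_apply_left]
        rfl
    have key : Equiv.swap ((y, 0) : Fin r × Fin 2) (y, 1)
        = ρ y * Equiv.swap ((y', 0) : Fin r × Fin 2) (y', 1) * (ρ y)⁻¹ := by
      rw [← Equiv.swap_apply_apply, hρy.1, hρy.2]
    rw [key]
    have hρmem : ρ y ∈ Subgroup.closure (ρ '' I) := Subgroup.subset_closure ⟨y, hyI, rfl⟩
    exact mul_mem (mul_mem hρmem hs') (inv_mem hρmem)

lemma flips_mem (I : Set (Fin r)) :
    ∀ (n : ℕ) (σ : Equiv.Perm (Fin r × Fin 2)), σ ∈ K (show 0 < r from Nat.lt_of_lt_of_le (by decide) hr) I →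
      (∀ (x : Fin r) (ε : Fin 2), (σ (x, ε)).1 = x) →
      (Finset.univ.filter fun y : Fin r => (σ (y, 0)).2 = 1).card ≤ n →
      σ ∈ Subgroup.closure (ρ '' I) := by
  intro n
  induction n with
  | zero =>
    intro σ hσK hid hcard
    have hempty : ∀ y : Fin r, (σ (y, 0)).2 = 0 := by
      intro y
      have : y ∉ Finset.univ.filter fun y : Fin r => (σ (y, 0)).2 = 1 := by
        intro hy
        have := Finset.card_pos.mpr ⟨y, hy⟩
        omega
      simp at this
      omega
    have : σ = 1 := by
      apply Equiv.ext
      rintro ⟨x, ε⟩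
      have hne := snd_ne σ (fun x ε => by rw [hid, hid]) x
      rw [hempty x] at hne
      have hε : ε = 0 ∨ ε = 1 := by omega
      rcases hε with rfl | rfl
      · rw [eta_apply σ x 0, hid, hempty x]; rfl
      · rw [eta_apply σ x 1, hid]
        have : (σ (x, 1)).2 = 1 := by omega
        rw [this]; rfl
    rw [this]; exact one_mem _
  | succ n ih =>
    intro σ hσK hid hcard
    by_cases hex : ∃ y : Fin r, (σ (y, 0)).2 = 1
    · obtain ⟨y, hy⟩ := hex
      obtain ⟨hA, hB, hC⟩ := hσK
      obtain ⟨hI0, hconn0⟩ := hC y hy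
      have ht : Equiv.swap ((y, 0) : Fin r × Fin 2) (y, 1) ∈ Subgroup.closure (ρ '' I) :=
        flip_mem hr ρ h0 hpos I y.1 y rfl hI0 hconn0
      set t := Equiv.swap ((y, 0) : Fin r × Fin 2) (y, 1) with hts
      have htK := closure_le_K hr ρ h0 hpos I ht
      have hσ'K : t * σ ∈ K (show 0 < r from Nat.lt_of_lt_of_le (by decide) hr) I := mul_mem htK ⟨hA, hB, hC⟩
      have hid' : ∀ (x : Fin r) (ε : Fin 2), ((t * σ) (x, ε)).1 = x := by
        intro x ε
        rw [Equiv.Perm.mul_apply, eta_apply σ x ε, hid, hts, swap_block_fst]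
      have hsub : (Finset.univ.filter fun z : Fin r => ((t * σ) (z, 0)).2 = 1)
          ⊆ (Finset.univ.filter fun z : Fin r => (σ (z, 0)).2 = 1).erase y := by
        intro z hz
        simp only [Finset.mem_filter, Finset.mem_univ, true_and] at hz
        rw [Equiv.Perm.mul_apply, eta_apply σ z 0, hid] at hz
        rcases eq_or_ne z y with rfl | hzy
        · exfalso
          rw [hy, hts, Equiv.swap_apply_right] at hz
          simp at hz
        · rw [hts, Equiv.swap_apply_of_ne_of_ne (by simp [Prod.ext_iff]; intro h; exact absurd h hzy)
            (by simp [Prod.ext_iff]; intro h; exact absurd h hzy)] at hz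
          simp only [Finset.mem_erase]
          exact ⟨hzy, by simp; exact hz⟩
      have hymem : y ∈ Finset.univ.filter fun z : Fin r => (σ (z, 0)).2 = 1 := by
        simp [hy]
      have hcard' : (Finset.univ.filter fun z : Fin r => ((t * σ) (z, 0)).2 = 1).card ≤ n := by
        have h1 := Finset.card_le_card hsub
        rw [Finset.card_erase_of_mem hymem] at h1
        have h2 := Finset.card_pos.mpr ⟨y, hymem⟩
        omega
      have hmem' := ih (t * σ) hσ'K hid' hcard'
      have : σ = t * (t * σ) := by
        rw [← mul_assoc, hts, Equiv.swap_mul_self, one_mul]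
      rw [this]
      exact mul_mem ht hmem'
    · push_neg at hex
      apply ih σ hσK hid
      have : (Finset.univ.filter fun y : Fin r => (σ (y, 0)).2 = 1) = ∅ := by
        apply Finset.filter_false_of_mem
        intro z _
        exact hex z
      rw [this]
      simp

lemma closure_eq_K (I : Set (Fin r)) :
    Subgroup.closure (ρ '' I) = K (show 0 < r from Nat.lt_of_lt_of_le (by decide) hr) I := by
  refine le_antisymm (closure_le_K hr ρ h0 hpos I) ?_
  rintro σ ⟨hA, hB, hC⟩
  set π : Equiv.Perm (Fin r) :=
    Equiv.ofBijective (bm σ) ⟨bm_inj σ hA, bm_surj σ hA⟩ with hπ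
  have hπx : ∀ x : Fin r, π x = (σ (x, 0)).1 := fun x => rfl
  have hπC : π ∈ Subgroup.closure (edgeSwaps I) := by
    apply young
    intro y
    rw [hπx]
    exact hB y
  have hφπ : phi r π ∈ Subgroup.closure (ρ '' I) := by
    have hmap : (Subgroup.closure (edgeSwaps I)).map (phi r) ≤ Subgroup.closure (ρ '' I) := by
      rw [MonoidHom.map_closure, Subgroup.closure_le]
      rintro e ⟨e', ⟨k, hkI, hk1, rfl⟩, rfl⟩
      apply Subgroup.subset_closure
      refine ⟨k, hkI, ?_⟩
      rw [hpos k hk1]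
      rfl
    exact hmap ⟨π, hπC, rfl⟩
  have hσ' : (phi r π)⁻¹ * σ ∈ K (show 0 < r from Nat.lt_of_lt_of_le (by decide) hr) I :=
    mul_mem (inv_mem (closure_le_K hr ρ h0 hpos I hφπ)) ⟨hA, hB, hC⟩
  have hid : ∀ (x : Fin r) (ε : Fin 2), (((phi r π)⁻¹ * σ) (x, ε)).1 = x := by
    intro x ε
    rw [Equiv.Perm.mul_apply, ← map_inv, eta_apply σ x ε, hA x ε, phi_apply_pt]
    show π⁻¹ (σ (x, 0)).1 = x
    rw [← hπx, Equiv.Perm.inv_def, Equiv.symm_apply_apply]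
  have hmem := flips_mem hr ρ h0 hpos I _ _ hσ' hid le_rfl
  have : σ = phi r π * ((phi r π)⁻¹ * σ) := by group
  rw [this]
  exact mul_mem hφπ hmem

end Main

end WreathAux




/-- The CPR graph of `C₂ ≀ S_r`: one transposition inside the first block together with the
simultaneous adjacent transpositions of blocks satisfies the string and intersection
properties, and generates the full stabilizer of the block system `{x} × Fin 2`. -/
theorem wreath_C2_Sr_is_string_C_group
    (r : ℕ) (hr : 2 ≤ r) (ρ : Fin r → Equiv.Perm (Fin r × Fin 2))
    (h0 : ∀ i : Fin r, (i : ℕ) = 0 →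
      ρ i = Equiv.swap (⟨0, by omega⟩, 0) (⟨0, by omega⟩, 1))
    (hpos : ∀ i : Fin r, 1 ≤ (i : ℕ) →
      ρ i = Equiv.prodCongr (Equiv.swap ⟨(i : ℕ) - 1, by omega⟩ ⟨(i : ℕ), i.isLt⟩)
        (Equiv.refl (Fin 2))) :
    (∀ i j : Fin r, (i : ℕ) + 2 ≤ (j : ℕ) ∨ (j : ℕ) + 2 ≤ (i : ℕ) →
      (ρ i * ρ j) ^ 2 = 1) ∧
    (∀ I J : Set (Fin r),
      Subgroup.closure (ρ '' I) ⊓ Subgroup.closure (ρ '' J) =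
        Subgroup.closure (ρ '' (I ∩ J))) ∧
    (∀ σ : Equiv.Perm (Fin r × Fin 2), σ ∈ Subgroup.closure (Set.range ρ) ↔
      ∃ π : Equiv.Perm (Fin r), ∀ (x : Fin r) (ε : Fin 2), (σ (x, ε)).1 = π x) := by
  refine ⟨?_, ?_, ?_⟩
  · -- string property
    have hsq : ∀ i : Fin r, ρ i * ρ i = 1 := by
      intro i
      rcases Nat.eq_zero_or_pos i.1 with hi | hi
      · rw [h0 i hi, Equiv.swap_mul_self]
      · rw [hpos i hi]
        have h2 : WreathAux.phi r (Equiv.swap ⟨i.1 - 1, by omega⟩ ⟨i.1, i.isLt⟩) *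
            WreathAux.phi r (Equiv.swap ⟨i.1 - 1, by omega⟩ ⟨i.1, i.isLt⟩) = 1 := by
          rw [← map_mul, Equiv.swap_mul_self, map_one]
        exact h2
    have hcomm : ∀ i j : Fin r, i.1 + 2 ≤ j.1 → Commute (ρ i) (ρ j) := by
      intro i j hij
      have hj : 1 ≤ j.1 := by omega
      rcases Nat.eq_zero_or_pos i.1 with hi | hi
      · rw [h0 i hi, hpos j hj]
        apply WreathAux.commute_swap_of_fixes
        · show ((Equiv.swap (⟨j.1 - 1, by omega⟩ : Fin r) ⟨j.1, j.isLt⟩) ⟨0, by omega⟩,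
            (Equiv.refl (Fin 2)) 0) = ((⟨0, by omega⟩ : Fin r), (0 : Fin 2))
          rw [Equiv.swap_apply_of_ne_of_ne (by simp [Fin.ext_iff]; omega)
            (by simp [Fin.ext_iff]; omega)]
          rfl
        · show ((Equiv.swap (⟨j.1 - 1, by omega⟩ : Fin r) ⟨j.1, j.isLt⟩) ⟨0, by omega⟩,
            (Equiv.refl (Fin 2)) 1) = ((⟨0, by omega⟩ : Fin r), (1 : Fin 2))
          rw [Equiv.swap_apply_of_ne_of_ne (by simp [Fin.ext_iff]; omega)
            (by simp [Fin.ext_iff]; omega)]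
          rfl
      · rw [hpos i hi, hpos j hj]
        have hcs : Commute (Equiv.swap (⟨i.1 - 1, by omega⟩ : Fin r) ⟨i.1, i.isLt⟩)
            (Equiv.swap (⟨j.1 - 1, by omega⟩ : Fin r) ⟨j.1, j.isLt⟩) := by
          apply WreathAux.commute_swap_of_fixes
          · exact Equiv.swap_apply_of_ne_of_ne (by simp [Fin.ext_iff]; omega)
              (by simp [Fin.ext_iff]; omega)
          · exact Equiv.swap_apply_of_ne_of_ne (by simp [Fin.ext_iff]; omega)
              (by simp [Fin.ext_iff]; omega)
        exact hcs.map (WreathAux.phi r)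
    intro i j hij
    have hc : Commute (ρ i) (ρ j) := by
      rcases hij with h | h
      · exact hcomm i j h
      · exact (hcomm j i h).symm
    rw [sq]
    calc ρ i * ρ j * (ρ i * ρ j) = ρ i * (ρ j * ρ i) * ρ j := by group
      _ = ρ i * (ρ i * ρ j) * ρ j := by rw [← hc.eq]
      _ = (ρ i * ρ i) * (ρ j * ρ j) := by group
      _ = 1 := by rw [hsq i, hsq j, one_mul]
  · -- intersection property
    intro I J
    rw [WreathAux.closure_eq_K hr ρ h0 hpos, WreathAux.closure_eq_K hr ρ h0 hpos,
      WreathAux.closure_eq_K hr ρ h0 hpos]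
    ext σ
    simp only [Subgroup.mem_inf]
    constructor
    · rintro ⟨⟨hA, hB1, hC1⟩, ⟨_, hB2, hC2⟩⟩
      exact ⟨hA, fun x => WreathAux.conn_inter.mpr ⟨hB1 x, hB2 x⟩,
        fun x h => ⟨⟨(hC1 x h).1, (hC2 x h).1⟩,
          WreathAux.conn_inter.mpr ⟨(hC1 x h).2, (hC2 x h).2⟩⟩⟩
    · rintro ⟨hA, hB, hC⟩
      exact ⟨⟨hA, fun x => (WreathAux.conn_inter.mp (hB x)).1,
          fun x h => ⟨((hC x h).1).1, (WreathAux.conn_inter.mp (hC x h).2).1⟩⟩,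
        ⟨hA, fun x => (WreathAux.conn_inter.mp (hB x)).2,
          fun x h => ⟨((hC x h).1).2, (WreathAux.conn_inter.mp (hC x h).2).2⟩⟩⟩
  · -- generated group
    intro σ
    rw [← Set.image_univ, WreathAux.closure_eq_K hr ρ h0 hpos]
    constructor
    · rintro ⟨hA, hB, hC⟩
      refine ⟨Equiv.ofBijective (WreathAux.bm σ)
        ⟨WreathAux.bm_inj σ hA, WreathAux.bm_surj σ hA⟩, ?_⟩
      intro x ε
      rw [hA x ε]
      rfl
    · rintro ⟨π, hπ⟩
      exact ⟨fun x ε => by rw [hπ x ε, hπ x 0], fun x k _ _ => Set.mem_univ k,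
        fun x h => ⟨Set.mem_univ _, fun k _ _ => Set.mem_univ k⟩⟩
end

section
/- Let r ≥ 3 and 1 ≤ h ≤ r−2 be integers. On Fin (r+h+1), define involutions ρ₀,…,ρ_{r−1} by: ρ₀ := (h h+1); for 1 ≤ l ≤ h, ρ_l := (h−l, h−l+1)·(h+l, h+l+1); and for h+1 ≤ l ≤ r−1, ρ_l := (h+l, h+l+1); where (p q) denotes the transposition Equiv.swap p q. (This is the permutation representation graph given by a path on r+h+1 vertices whose successive edge labels are h, h−1, …, 1, 0, 1, …, h, h+1, …, r−1.) Then (ρ₀,…,ρ_{r−1}) satisfies the string property and the intersection property, and ⟨ρ₀,…,ρ_{r−1}⟩ = Sym(Fin (r+h+1)) (the full symmetric group on r+h+1 points). -/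
namespace CPRSrh

def lab (h j : ℕ) : ℕ := if j < h then h - j else j - h

def kk (h x : ℕ) : ℕ := if x ≤ h then h - x else x - h - 1

def tau (h x : ℕ) : ℕ := if x ≤ 2*h+1 then 2*h+1 - x else x

def act (h l x : ℕ) : ℕ :=
  if l = 0 then (if x = h then h+1 else if x = h+1 then h else x)
  else if l ≤ h then
    (if x = h - l then h - l + 1 else if x = h - l + 1 then h - l
     else if x = h + l then h + l + 1 else if x = h + l + 1 then h + l else x)
  else (if x = h + l then h + l + 1 else if x = h + l + 1 then h + l else x)

theorem lab_spec (h j : ℕ) : (j < h → lab h j = h - j) ∧ (h ≤ j → lab h j = j - h) := by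
  unfold lab; split_ifs <;> omega

theorem kk_spec (h x : ℕ) : (x ≤ h → kk h x = h - x) ∧ (h < x → kk h x = x - h - 1) := by
  unfold kk; split_ifs <;> omega

theorem tau_spec (h x : ℕ) : (x ≤ 2*h+1 → tau h x = 2*h+1 - x) ∧ (2*h+1 < x → tau h x = x) := by
  unfold tau; split_ifs <;> omega

theorem act_spec (h l x : ℕ) :
    (l = 0 → ((x = h ∧ act h l x = h+1) ∨ (x = h+1 ∧ act h l x = h) ∨
      (¬x = h ∧ ¬x = h+1 ∧ act h l x = x))) ∧
    (1 ≤ l ∧ l ≤ h → ((x = h-l ∧ act h l x = h-l+1) ∨ (x = h-l+1 ∧ act h l x = h-l) ∨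
      (x = h+l ∧ act h l x = h+l+1) ∨ (x = h+l+1 ∧ act h l x = h+l) ∨
      (¬x=h-l ∧ ¬x=h-l+1 ∧ ¬x=h+l ∧ ¬x=h+l+1 ∧ act h l x = x))) ∧
    (h+1 ≤ l → ((x = h+l ∧ act h l x = h+l+1) ∨ (x = h+l+1 ∧ act h l x = h+l) ∨
      (¬x=h+l ∧ ¬x=h+l+1 ∧ act h l x = x))) := by
  unfold act; split_ifs <;> omega

theorem act_act_self (h l x : ℕ) (h1 : 1 ≤ h) : act h l (act h l x) = x := by
  have A := act_spec h l x
  have B := act_spec h l (act h l x)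
  omega

theorem act_fix (h l x : ℕ)
    (hL : 1 ≤ l → l ≤ h → ¬x = h - l ∧ ¬x = h - l + 1)
    (hR1 : ¬x = h + l) (hR2 : ¬x = h + l + 1) : act h l x = x := by
  have A := act_spec h l x
  by_cases h0 : l = 0
  · subst h0; omega
  · by_cases hlh : l ≤ h
    · have := hL (by omega) hlh; omega
    · omega

theorem act_move (h l x : ℕ) :
    act h l x = x ∨
    (1 ≤ l ∧ l ≤ h ∧ (x = h-l ∨ x = h-l+1) ∧ (act h l x = h-l ∨ act h l x = h-l+1)) ∨
    ((x = h+l ∨ x = h+l+1) ∧ (act h l x = h+l ∨ act h l x = h+l+1)) := by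
  have A := act_spec h l x
  by_cases h0 : l = 0
  · subst h0; omega
  · by_cases hlh : l ≤ h <;> omega

theorem act_comm (h l l' x : ℕ) (h1 : 1 ≤ h) (hll : l + 2 ≤ l' ∨ l' + 2 ≤ l) :
    act h l (act h l' x) = act h l' (act h l x) := by
  rcases act_move h l x with e1 | m1
  · rcases act_move h l' x with e2 | m2
    · simp only [e1, e2]
    · rw [e1]
      have e3 : act h l (act h l' x) = act h l' x :=
        act_fix h l _ (fun a b => by omega) (by omega) (by omega)
      rw [e3]
  · have e2 : act h l' x = x :=
      act_fix h l' x (fun a b => by omega) (by omega) (by omega)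
    rw [e2]
    have e3 : act h l' (act h l x) = act h l x :=
      act_fix h l' _ (fun a b => by omega) (by omega) (by omega)
    rw [e3]

theorem act_tau_comm (h l x : ℕ) (h1 : 1 ≤ h) (hl : l ≤ h) :
    act h l (tau h x) = tau h (act h l x) := by
  have A := act_spec h l x
  have B := act_spec h l (tau h x)
  have T := tau_spec h x
  have T2 := tau_spec h (act h l x)
  omega

end CPRSrh

namespace CPRSrh

def Prel (h : ℕ) (S : Set ℕ) (x y : ℕ) : Prop :=
  ∀ j, min x y ≤ j → j < max x y → lab h j ∈ S

def CZ (h : ℕ) (S : Set ℕ) (x : ℕ) : Prop :=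
  ∃ l, l ∈ S ∧ l ≤ h ∧ (l = kk h x ∨ l = kk h x + 1) ∧
    ¬(∀ m, l ≤ m → m ≤ h+1 → m ∈ S)

theorem Prel_refl (h : ℕ) (S : Set ℕ) (x : ℕ) : Prel h S x x := by
  intro j hj1 hj2; omega

theorem Prel_symm {h : ℕ} {S : Set ℕ} {x y : ℕ} (hp : Prel h S x y) : Prel h S y x := by
  intro j hj1 hj2; exact hp j (by omega) (by omega)

theorem Prel_trans {h : ℕ} {S : Set ℕ} {x y z : ℕ} (h1 : Prel h S x y) (h2 : Prel h S y z) :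
    Prel h S x z := by
  intro j hj1 hj2
  by_cases hc : min x y ≤ j ∧ j < max x y
  · exact h1 j hc.1 hc.2
  · exact h2 j (by omega) (by omega)

theorem Prel_inter {h : ℕ} {S T : Set ℕ} {x y : ℕ} (h1 : Prel h S x y) (h2 : Prel h T x y) :
    Prel h (S ∩ T) x y := fun j a b => ⟨h1 j a b, h2 j a b⟩

theorem label_right_mem {h : ℕ} {S : Set ℕ} {x y : ℕ} (hrel : Prel h S x y) (m : ℕ)
    (hb1 : min x y ≤ h + m) (hb2 : h + m < max x y) : m ∈ S := by
  have e : lab h (h+m) = m := by have := lab_spec h (h+m); omega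
  exact e ▸ hrel (h+m) hb1 hb2

theorem label_left_mem {h : ℕ} {S : Set ℕ} {x y : ℕ} (hrel : Prel h S x y) (m : ℕ)
    (hm1 : 1 ≤ m) (hm2 : m ≤ h)
    (hb1 : min x y ≤ h - m) (hb2 : h - m < max x y) : m ∈ S := by
  have e : lab h (h-m) = m := by have := lab_spec h (h-m); omega
  exact e ▸ hrel (h-m) hb1 hb2

theorem label_zero_mem {h : ℕ} {S : Set ℕ} {x y : ℕ} (hrel : Prel h S x y)
    (hb1 : min x y ≤ h) (hb2 : h < max x y) : (0:ℕ) ∈ S := by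
  have e : lab h h = 0 := by have := lab_spec h h; omega
  exact e ▸ hrel h hb1 hb2

theorem CZ_le {h : ℕ} {S : Set ℕ} {x : ℕ} (hx : CZ h S x) : x ≤ 2*h+1 := by
  obtain ⟨l, _, hlh, hk, _⟩ := hx
  have := kk_spec h x; omega

theorem Prel_CZ_bound {h : ℕ} {S : Set ℕ} {x y : ℕ}
    (hrel : Prel h S x y) (hx : CZ h S x) : y ≤ 2*h+1 := by
  have hx2 := CZ_le hx
  obtain ⟨l, hlS, hlh, hk, hcon⟩ := hx
  by_contra hy
  push_neg at hy
  apply hcon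
  intro m hm1 hm2
  rcases Nat.eq_or_lt_of_le hm1 with he | hlt
  · exact he ▸ hlS
  · have hkx := kk_spec h x
    exact label_right_mem hrel m (by omega) (by omega)

theorem CZ_of_bridge {h : ℕ} {S : Set ℕ} {y : ℕ} (l l' : ℕ)
    (hl'S : l' ∈ S) (hl'h : l' ≤ h) (hk' : l' = kk h y ∨ l' = kk h y + 1)
    (bridge : ∀ m, min l l' ≤ m → m ≤ max l l' → m ∈ S)
    (hcon : ¬(∀ m, l ≤ m → m ≤ h+1 → m ∈ S)) : CZ h S y := by
  refine ⟨l', hl'S, hl'h, hk', fun K => hcon fun m hm1 hm2 => ?_⟩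
  by_cases hm : l' ≤ m
  · exact K m hm hm2
  · exact bridge m (by omega) (by omega)

theorem CZ_transfer {h : ℕ} {S : Set ℕ} {x y : ℕ}
    (hrel : Prel h S x y) (hx : CZ h S x) : CZ h S y := by
  have hx2 := CZ_le hx
  have hy2 := Prel_CZ_bound hrel hx
  obtain ⟨l, hlS, hlh, hk, hcon⟩ := hx
  have hkx := kk_spec h x
  have hky := kk_spec h y
  rcases eq_or_ne x y with rfl | hxy
  · exact ⟨l, hlS, hlh, hk, hcon⟩
  by_cases hxh : x ≤ h
  · by_cases hyh : y ≤ h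
    · -- both left
      rcases Nat.lt_trichotomy (kk h y) (kk h x) with hlt | heq | hgt
      · -- x < y ≤ h ; l' = kk h y + 1
        have hm' : kk h y + 1 ∈ S :=
          label_left_mem hrel (kk h y + 1) (by omega) (by omega) (by omega) (by omega)
        refine CZ_of_bridge l (kk h y + 1) hm' (by omega) (by omega)
          (fun m hm1 hm2 => ?_) hcon
        rcases eq_or_ne m l with rfl | hml
        · exact hlS
        rcases eq_or_ne m (kk h y + 1) with rfl | hml'
        · exact hm'
        · exact label_left_mem hrel m (by omega) (by omega) (by omega) (by omega)
      · exact ⟨l, hlS, hlh, by omega, hcon⟩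
      · -- y < x ≤ h ; l' = kk h y
        have hm' : kk h y ∈ S :=
          label_left_mem hrel (kk h y) (by omega) (by omega) (by omega) (by omega)
        refine CZ_of_bridge l (kk h y) hm' (by omega) (by omega)
          (fun m hm1 hm2 => ?_) hcon
        rcases eq_or_ne m l with rfl | hml
        · exact hlS
        rcases eq_or_ne m (kk h y) with rfl | hml'
        · exact hm'
        · exact label_left_mem hrel m (by omega) (by omega) (by omega) (by omega)
    · -- x ≤ h < y ; l' = kk h y
      have hm' : kk h y ∈ S := by
        rcases Nat.eq_zero_or_pos (kk h y) with h0 | h0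
        · exact h0 ▸ label_zero_mem hrel (by omega) (by omega)
        · exact label_right_mem hrel (kk h y) (by omega) (by omega)
      refine CZ_of_bridge l (kk h y) hm' (by omega) (by omega)
        (fun m hm1 hm2 => ?_) hcon
      rcases eq_or_ne m l with rfl | hml
      · exact hlS
      rcases eq_or_ne m (kk h y) with rfl | hml'
      · exact hm'
      rcases Nat.eq_zero_or_pos m with rfl | hm0
      · exact label_zero_mem hrel (by omega) (by omega)
      by_cases hmk : m ≤ kk h x
      · exact label_left_mem hrel m (by omega) (by omega) (by omega) (by omega)
      · exact label_right_mem hrel m (by omega) (by omega)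
  · by_cases hyh : y ≤ h
    · -- y ≤ h < x ; l' = kk h y
      have hm' : kk h y ∈ S := by
        rcases Nat.eq_zero_or_pos (kk h y) with h0 | h0
        · exact h0 ▸ label_zero_mem hrel (by omega) (by omega)
        · exact label_left_mem hrel (kk h y) (by omega) (by omega) (by omega) (by omega)
      refine CZ_of_bridge l (kk h y) hm' (by omega) (by omega)
        (fun m hm1 hm2 => ?_) hcon
      rcases eq_or_ne m l with rfl | hml
      · exact hlS
      rcases eq_or_ne m (kk h y) with rfl | hml'
      · exact hm'
      rcases Nat.eq_zero_or_pos m with rfl | hm0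
      · exact label_zero_mem hrel (by omega) (by omega)
      by_cases hmk : m ≤ kk h x
      · exact label_right_mem hrel m (by omega) (by omega)
      · exact label_left_mem hrel m (by omega) (by omega) (by omega) (by omega)
    · -- both right
      rcases Nat.lt_trichotomy (kk h y) (kk h x) with hlt | heq | hgt
      · -- y < x ; l' = kk h y + 1
        have hm' : kk h y + 1 ∈ S :=
          label_right_mem hrel (kk h y + 1) (by omega) (by omega)
        refine CZ_of_bridge l (kk h y + 1) hm' (by omega) (by omega)
          (fun m hm1 hm2 => ?_) hcon
        rcases eq_or_ne m l with rfl | hml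
        · exact hlS
        rcases eq_or_ne m (kk h y + 1) with rfl | hml'
        · exact hm'
        · exact label_right_mem hrel m (by omega) (by omega)
      · exact ⟨l, hlS, hlh, by omega, hcon⟩
      · -- x < y ; l' = kk h y
        have hm' : kk h y ∈ S :=
          label_right_mem hrel (kk h y) (by omega) (by omega)
        refine CZ_of_bridge l (kk h y) hm' (by omega) (by omega)
          (fun m hm1 hm2 => ?_) hcon
        rcases eq_or_ne m l with rfl | hml
        · exact hlS
        rcases eq_or_ne m (kk h y) with rfl | hml'
        · exact hm'
        · exact label_right_mem hrel m (by omega) (by omega)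

end CPRSrh

namespace CPRSrh

open Equiv

def tauF (h : ℕ) {n : ℕ} (x : Fin n) : Fin n :=
  if hx : (x:ℕ) ≤ 2*h+1 ∧ 2*h+1 < n then ⟨2*h+1 - (x:ℕ), by omega⟩ else x

theorem tauF_val {h n : ℕ} (hn : 2*h+1 < n) (x : Fin n) : ((tauF h x) : ℕ) = tau h (x:ℕ) := by
  have ht := tau_spec h (x:ℕ)
  unfold tauF
  split_ifs with hx
  · simp only []; omega
  · omega

def CC (h n : ℕ) (S : Set ℕ) : Subgroup (Equiv.Perm (Fin n)) where
  carrier := {g | (∀ x : Fin n, Prel h S (x:ℕ) ((g x : Fin n):ℕ)) ∧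
    (∀ x : Fin n, CZ h S (x:ℕ) → g (tauF h x) = tauF h (g x))}
  one_mem' := by
    constructor
    · intro x; simpa using Prel_refl h S (x:ℕ)
    · intro x _; rfl
  mul_mem' := by
    rintro a b ⟨ha1, ha2⟩ ⟨hb1, hb2⟩
    constructor
    · intro x
      have k1 := hb1 x
      have k2 := ha1 (b x)
      simpa using Prel_trans k1 k2
    · intro x hx
      have hbx : CZ h S ((b x : Fin n):ℕ) := CZ_transfer (hb1 x) hx
      simp only [Equiv.Perm.mul_apply]
      rw [hb2 x hx, ha2 (b x) hbx]
  inv_mem' := by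
    rintro g ⟨hg1, hg2⟩
    constructor
    · intro x
      have k := hg1 (g⁻¹ x)
      rw [(by exact g.apply_symm_apply x : g (g⁻¹ x) = x)] at k
      exact Prel_symm k
    · intro x hx
      have hgx : CZ h S ((g⁻¹ x : Fin n):ℕ) := by
        refine CZ_transfer (Prel_symm ?_) hx
        have k := hg1 (g⁻¹ x)
        rwa [(by exact g.apply_symm_apply x : g (g⁻¹ x) = x)] at k
      have k := hg2 (g⁻¹ x) hgx
      rw [(by exact g.apply_symm_apply x : g (g⁻¹ x) = x)] at k
      rw [← k]; exact g.symm_apply_apply _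

theorem mem_CC {h n : ℕ} {S : Set ℕ} {g : Equiv.Perm (Fin n)} :
    g ∈ CC h n S ↔ ((∀ x : Fin n, Prel h S (x:ℕ) ((g x : Fin n):ℕ)) ∧
      (∀ x : Fin n, CZ h S (x:ℕ) → g (tauF h x) = tauF h (g x))) := Iff.rfl

theorem CC_inter {h n : ℕ} {S T : Set ℕ} : CC h n S ⊓ CC h n T ≤ CC h n (S ∩ T) := by
  intro g hg
  rw [Subgroup.mem_inf] at hg
  obtain ⟨⟨hS1, hS2⟩, hT1, hT2⟩ := hg
  constructor
  · intro x; exact Prel_inter (hS1 x) (hT1 x)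
  · rintro x ⟨l, ⟨hlS, hlT⟩, hlh, hk, hcon⟩
    by_cases hc : ∀ m, l ≤ m → m ≤ h+1 → m ∈ S
    · exact hT2 x ⟨l, hlT, hlh, hk, fun K => hcon fun m a b => ⟨hc m a b, K m a b⟩⟩
    · exact hS2 x ⟨l, hlS, hlh, hk, hc⟩

theorem swap_val {n : ℕ} (a b x : Fin n) :
    ((Equiv.swap a b) x : ℕ) =
      if (x:ℕ) = (a:ℕ) then (b:ℕ) else if (x:ℕ) = (b:ℕ) then (a:ℕ) else (x:ℕ) := by
  rw [Equiv.swap_apply_def]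
  split_ifs <;> simp_all [Fin.ext_iff]

theorem act_rel {h : ℕ} {S : Set ℕ} (l x : ℕ) (hl : l ∈ S) : Prel h S x (act h l x) := by
  intro j hj1 hj2
  rcases act_move h l x with e | ⟨h1l, hlh, hx, ha⟩ | ⟨hx, ha⟩
  · omega
  · have e : lab h (h-l) = l := by have := lab_spec h (h-l); omega
    have hj : j = h - l := by omega
    rw [hj, e]; exact hl
  · have e : lab h (h+l) = l := by have := lab_spec h (h+l); omega
    have hj : j = h + l := by omega
    rw [hj, e]; exact hl

theorem act_fix_highCZ {h : ℕ} {S : Set ℕ} {l x : ℕ} (hl : l ∈ S) (hlh : h+1 ≤ l)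
    (hx : CZ h S x) : act h l x = x ∧ act h l (tau h x) = tau h x := by
  obtain ⟨l₀, hl₀S, hl₀h, hk, hcon⟩ := hx
  have hkx := kk_spec h x
  have ht := tau_spec h x
  have hx2 : x ≤ 2*h+1 := by omega
  have key : ¬(x = h+l ∨ x = h+l+1 ∨ tau h x = h+l ∨ tau h x = h+l+1) := by
    intro hbad
    have hl1 : l = h+1 := by omega
    have hl0 : l₀ = h := by omega
    exact hcon (fun m hm1 hm2 => by
      rcases (by omega : m = h ∨ m = h+1) with rfl | rfl
      · exact hl0 ▸ hl₀S
      · exact hl1 ▸ hl)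
  constructor
  · exact act_fix h l x (fun a b => by omega) (fun e => key (Or.inl e))
      (fun e => key (Or.inr (Or.inl e)))
  · exact act_fix h l (tau h x) (fun a b => by omega)
      (fun e => key (Or.inr (Or.inr (Or.inl e)))) (fun e => key (Or.inr (Or.inr (Or.inr e))))

end CPRSrh

namespace CPRSrh

section
variable {r h : ℕ} {ρ : Fin r → Equiv.Perm (Fin (r + h + 1))}

theorem act_spec_of (hr : 3 ≤ r) (h1 : 1 ≤ h) (h2 : h ≤ r - 2)
    (hzero : ∀ l : Fin r, (l : ℕ) = 0 →
      ρ l = Equiv.swap ⟨h, by have := ρ; omega⟩ ⟨h + 1, by have := ρ; omega⟩)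
    (hmid : ∀ l : Fin r, ∀ hl : 1 ≤ (l : ℕ) ∧ (l : ℕ) ≤ h,
      ρ l = Equiv.swap ⟨h - (l : ℕ), by have := ρ; omega⟩ ⟨h - (l : ℕ) + 1, by have := ρ; omega⟩ *
        Equiv.swap ⟨h + (l : ℕ), by have := ρ; omega⟩ ⟨h + (l : ℕ) + 1, by have := ρ; omega⟩)
    (hhigh : ∀ l : Fin r, ∀ hl : h + 1 ≤ (l : ℕ),
      ρ l = Equiv.swap ⟨h + (l : ℕ), by have := ρ; omega⟩ ⟨h + (l : ℕ) + 1, by have := ρ; omega⟩) :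
    ∀ (l : Fin r) (x : Fin (r + h + 1)), ((ρ l) x : ℕ) = act h (l : ℕ) (x : ℕ) := by
  intro l x
  have A := act_spec h (l:ℕ) (x:ℕ)
  rcases (by omega : (l:ℕ) = 0 ∨ (1 ≤ (l:ℕ) ∧ (l:ℕ) ≤ h) ∨ h + 1 ≤ (l:ℕ)) with h0 | hm | hh
  · rw [hzero l h0, swap_val]
    simp only [Fin.val_mk] at *
    rw [h0] at A ⊢  -- ?
    split_ifs <;> omega
  · rw [hmid l hm, Equiv.Perm.mul_apply, swap_val, swap_val]
    simp only [Fin.val_mk] at *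
    split_ifs <;> omega
  · rw [hhigh l hh, swap_val]
    simp only [Fin.val_mk] at *
    split_ifs <;> omega

end
end CPRSrh

namespace CPRSrh

section
variable {r h : ℕ} {ρ : Fin r → Equiv.Perm (Fin (r + h + 1))}

theorem closure_le_CC
    (hact : ∀ (l : Fin r) (x : Fin (r + h + 1)), ((ρ l) x : ℕ) = act h (l : ℕ) (x : ℕ))
    (h1 : 1 ≤ h) (hn : 2*h+1 < r+h+1) (I : Set (Fin r)) :
    Subgroup.closure (ρ '' I) ≤ CC h (r+h+1) (Fin.val '' I) := by
  rw [Subgroup.closure_le]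
  rintro g ⟨i, hiI, rfl⟩
  rw [SetLike.mem_coe, mem_CC]
  constructor
  · intro x
    rw [hact i x]
    exact act_rel _ _ ⟨i, hiI, rfl⟩
  · intro x hx
    apply Fin.val_injective
    simp only [hact, tauF_val hn]
    rcases le_or_gt (i:ℕ) h with hc | hc
    · exact act_tau_comm h i x.val h1 hc
    · have e := act_fix_highCZ (⟨i, hiI, rfl⟩ : (i:ℕ) ∈ Fin.val '' I) hc hx
      rw [e.1, e.2]

theorem top_le_CC (h1 : 1 ≤ h) (h2 : h ≤ r - 2) (hr : 3 ≤ r) :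
    (⊤ : Subgroup (Equiv.Perm (Fin (r+h+1)))) ≤
      CC h (r+h+1) (Fin.val '' (Set.univ : Set (Fin r))) := by
  intro g _
  constructor
  · intro x j hj1 hj2
    have hb : lab h j < r := by
      have := lab_spec h j; have := x.isLt; have := (g x).isLt; omega
    exact ⟨⟨lab h j, hb⟩, trivial, rfl⟩
  · rintro x ⟨l, hlS, hlh, hk, hcon⟩
    exact absurd (fun m hm1 hm2 => ⟨⟨m, by omega⟩, trivial, rfl⟩) hcon

theorem string_prop
    (hact : ∀ (l : Fin r) (x : Fin (r + h + 1)), ((ρ l) x : ℕ) = act h (l : ℕ) (x : ℕ))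
    (h1 : 1 ≤ h) :
    ∀ i j : Fin r, (i : ℕ) + 2 ≤ (j : ℕ) ∨ (j : ℕ) + 2 ≤ (i : ℕ) → (ρ i * ρ j) ^ 2 = 1 := by
  intro i j hij
  have comm : ρ i * ρ j = ρ j * ρ i := by
    ext x
    simp only [Equiv.Perm.mul_apply, hact]
    exact act_comm h i j x.val h1 (by omega)
  have invi : ρ i * ρ i = 1 := by
    ext x
    simp only [Equiv.Perm.mul_apply, hact, Equiv.Perm.coe_one, id_eq]
    exact act_act_self h i x.val h1
  have invj : ρ j * ρ j = 1 := by
    ext x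
    simp only [Equiv.Perm.mul_apply, hact, Equiv.Perm.coe_one, id_eq]
    exact act_act_self h j x.val h1
  rw [sq, mul_assoc, ← mul_assoc (ρ j) (ρ i) (ρ j), ← comm,
    mul_assoc (ρ i) (ρ j) (ρ j), invj, mul_one, invi]

end
end CPRSrh

namespace CPRSrh

open Equiv Finset

theorem swap_val_cases {n : ℕ} (a b x : Fin n) :
    ((x:ℕ) = (a:ℕ) ∧ (((Equiv.swap a b) x):ℕ) = (b:ℕ)) ∨
    ((x:ℕ) = (b:ℕ) ∧ (((Equiv.swap a b) x):ℕ) = (a:ℕ)) ∨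
    (¬(x:ℕ) = (a:ℕ) ∧ ¬(x:ℕ) = (b:ℕ) ∧ (((Equiv.swap a b) x):ℕ) = (x:ℕ)) := by
  have v := swap_val a b x
  split_ifs at v <;> omega

def invc {n : ℕ} (g : Equiv.Perm (Fin n)) : ℕ :=
  (Finset.univ.filter
    (fun p : Fin n × Fin n => (p.1:ℕ) < (p.2:ℕ) ∧ ((g p.2):ℕ) < ((g p.1):ℕ))).card

theorem invc_pos {n : ℕ} (g : Equiv.Perm (Fin n)) (a b : Fin n)
    (h1 : (a:ℕ) < (b:ℕ)) (h2 : ((g b):ℕ) < ((g a):ℕ)) : 0 < invc g := by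
  apply Finset.card_pos.mpr
  refine ⟨(a, b), Finset.mem_filter.mpr ⟨Finset.mem_univ _, ?_⟩⟩
  exact ⟨h1, h2⟩

theorem invc_mul_swap {n : ℕ} (g : Equiv.Perm (Fin n)) (a b : Fin n)
    (hab : (a:ℕ) + 1 = (b:ℕ)) (hd : ((g b):ℕ) < ((g a):ℕ)) :
    invc (g * Equiv.swap a b) + 1 = invc g := by
  classical
  have habG : (a, b) ∈ Finset.univ.filter
      (fun p : Fin n × Fin n => (p.1:ℕ) < (p.2:ℕ) ∧ ((g p.2):ℕ) < ((g p.1):ℕ)) := by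
    refine Finset.mem_filter.mpr ⟨Finset.mem_univ _, ?_⟩
    exact ⟨show (a:ℕ) < (b:ℕ) by omega, hd⟩
  have key : (Finset.univ.filter
      (fun p : Fin n × Fin n => (p.1:ℕ) < (p.2:ℕ) ∧
        (((g * Equiv.swap a b) p.2):ℕ) < (((g * Equiv.swap a b) p.1):ℕ))).card
      = ((Finset.univ.filter
      (fun p : Fin n × Fin n => (p.1:ℕ) < (p.2:ℕ) ∧
        ((g p.2):ℕ) < ((g p.1):ℕ))).erase (a,b)).card := by
    apply Finset.card_nbij' (i := fun p => (Equiv.swap a b p.1, Equiv.swap a b p.2))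
      (j := fun p => (Equiv.swap a b p.1, Equiv.swap a b p.2))
    · rintro ⟨p1, p2⟩ hp
      rw [Finset.mem_coe, Finset.mem_filter] at hp
      obtain ⟨-, hlt, hinv⟩ := hp
      dsimp only at hlt hinv ⊢
      simp only [Equiv.Perm.mul_apply] at hinv
      have hpab : ¬((p1:ℕ) = (a:ℕ) ∧ (p2:ℕ) = (b:ℕ)) := by
        rintro ⟨e1, e2⟩
        rw [Fin.val_injective e1, Fin.val_injective e2, Equiv.swap_apply_left,
          Equiv.swap_apply_right] at hinv
        omega
      have v1 := swap_val_cases a b p1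
      have v2 := swap_val_cases a b p2
      rw [Finset.mem_coe, Finset.mem_erase]
      constructor
      · intro e
        have e1' : ((Equiv.swap a b p1 : Fin n) : ℕ) = (a:ℕ) :=
          congrArg Fin.val (congrArg Prod.fst e)
        have e2' : ((Equiv.swap a b p2 : Fin n) : ℕ) = (b:ℕ) :=
          congrArg Fin.val (congrArg Prod.snd e)
        omega
      · refine Finset.mem_filter.mpr ⟨Finset.mem_univ _, ?_, hinv⟩
        dsimp only
        omega
    · rintro ⟨p1, p2⟩ hp
      rw [Finset.mem_coe, Finset.mem_erase, Finset.mem_filter] at hp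
      obtain ⟨hne, -, hlt, hinv⟩ := hp
      dsimp only at hlt hinv ⊢
      have hpab : ¬((p1:ℕ) = (a:ℕ) ∧ (p2:ℕ) = (b:ℕ)) := by
        rintro ⟨e1, e2⟩
        exact hne (by rw [Fin.val_injective e1, Fin.val_injective e2])
      have v1 := swap_val_cases a b p1
      have v2 := swap_val_cases a b p2
      refine Finset.mem_filter.mpr ⟨Finset.mem_univ _, ?_, ?_⟩
      · dsimp only; omega
      · dsimp only
        simp only [Equiv.Perm.mul_apply, Equiv.swap_apply_self]
        exact hinv
    · rintro ⟨p1, p2⟩ _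
      simp [Equiv.swap_apply_self]
    · rintro ⟨p1, p2⟩ _
      simp [Equiv.swap_apply_self]
  have hcard := Finset.card_erase_of_mem habG
  have hpos : 0 < (Finset.univ.filter
      (fun p : Fin n × Fin n => (p.1:ℕ) < (p.2:ℕ) ∧ ((g p.2):ℕ) < ((g p.1):ℕ))).card :=
    Finset.card_pos.mpr ⟨(a,b), habG⟩
  unfold invc
  rw [key, hcard]
  omega

end CPRSrh

namespace CPRSrh

theorem eq_one_of_mono {n : ℕ} (g : Equiv.Perm (Fin n))
    (mono : ∀ x : Fin n, (x:ℕ) ≤ ((g x):ℕ)) : g = 1 := by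
  have hsum : (∑ x : Fin n, ((g x):ℕ)) = ∑ x : Fin n, (x:ℕ) :=
    Equiv.sum_comp g (fun x => (x:ℕ))
  have hpt := (Finset.sum_eq_sum_iff_of_le (fun i _ => mono i)).mp hsum.symm
  ext x
  exact (hpt x (Finset.mem_univ x)).symm

theorem exists_descent {h n : ℕ} {S : Set ℕ} {g : Equiv.Perm (Fin n)}
    (hgrel : ∀ x : Fin n, Prel h S (x:ℕ) ((g x):ℕ)) (hg : g ≠ 1) :
    ∃ j : ℕ, ∃ hj : j + 1 < n, lab h j ∈ S ∧
      ((g ⟨j+1, hj⟩):ℕ) < ((g ⟨j, by omega⟩):ℕ) := by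
  by_contra hc
  push_neg at hc
  apply hg
  apply eq_one_of_mono
  have claim : ∀ m : ℕ, ∀ x : Fin n, (x:ℕ) = m → m ≤ ((g x):ℕ) := by
    intro m
    induction m using Nat.strong_induction_on with
    | _ m IH =>
      intro x hx
      by_contra hlt
      push_neg at hlt
      have hm1 : 1 ≤ m := by omega
      have hrel := hgrel x
      have hjlt : (m-1) + 1 < n := by have := x.isLt; omega
      have hlabS : lab h (m-1) ∈ S := hrel (m-1) (by omega) (by omega)
      set y : Fin n := ⟨m-1, by omega⟩ with hy
      have hIH : m - 1 ≤ ((g y):ℕ) := IH (m-1) (by omega) y rfl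
      have hnd' := hc (m-1) hjlt hlabS
      have hxeq : (⟨(m-1)+1, hjlt⟩ : Fin n) = x := by
        apply Fin.val_injective; simp; omega
      rw [hxeq] at hnd'
      have hnd : ((g y):ℕ) ≤ ((g x):ℕ) := hnd'
      have heq : g y = g x := Fin.val_injective (by omega)
      have hyx := congrArg Fin.val (g.injective heq)
      simp [hy] at hyx
      omega
  exact fun x => claim (x:ℕ) x rfl

end CPRSrh

namespace CPRSrh

theorem swap_eq_of_val {n : ℕ} (a b a' b' : Fin n) (ha : (a:ℕ) = (a':ℕ)) (hb : (b:ℕ) = (b':ℕ)) :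
    Equiv.swap a b = Equiv.swap a' b' := by
  rw [Fin.val_injective ha, Fin.val_injective hb]

theorem swap_comm_of {n : ℕ} (a b c d : Fin n)
    (hd : max (a:ℕ) (b:ℕ) < min (c:ℕ) (d:ℕ)) :
    Equiv.swap a b * Equiv.swap c d = Equiv.swap c d * Equiv.swap a b := by
  ext x
  simp only [Equiv.Perm.mul_apply]
  have A := swap_val_cases a b x
  have B := swap_val_cases c d x
  have C := swap_val_cases a b (Equiv.swap c d x)
  have D := swap_val_cases c d (Equiv.swap a b x)
  omega

section
variable {r h : ℕ} {ρ : Fin r → Equiv.Perm (Fin (r + h + 1))}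

theorem t_mem (hr : 3 ≤ r) (h1 : 1 ≤ h) (h2 : h ≤ r - 2)
    (hmid : ∀ l : Fin r, ∀ hl : 1 ≤ (l : ℕ) ∧ (l : ℕ) ≤ h,
      ρ l = Equiv.swap ⟨h - (l : ℕ), by have := ρ; omega⟩ ⟨h - (l : ℕ) + 1, by have := ρ; omega⟩ *
        Equiv.swap ⟨h + (l : ℕ), by have := ρ; omega⟩ ⟨h + (l : ℕ) + 1, by have := ρ; omega⟩)
    (hhigh : ∀ l : Fin r, ∀ hl : h + 1 ≤ (l : ℕ),
      ρ l = Equiv.swap ⟨h + (l : ℕ), by have := ρ; omega⟩ ⟨h + (l : ℕ) + 1, by have := ρ; omega⟩)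
    (hact : ∀ (l : Fin r) (x : Fin (r + h + 1)), ((ρ l) x : ℕ) = act h (l : ℕ) (x : ℕ))
    (I : Set (Fin r)) :
    ∀ d l : ℕ, ∀ hld : l + d = h + 1, ∀ hl1 : 1 ≤ l,
    ∀ htail : (∀ m, l ≤ m → m ≤ h+1 → m ∈ Fin.val '' I),
    Equiv.swap (⟨h+l, by omega⟩ : Fin (r+h+1)) ⟨h+l+1, by omega⟩ ∈
      Subgroup.closure (ρ '' I) := by
  intro d
  induction d with
  | zero =>
    intro l hld hl1 htail
    have hl : l = h + 1 := by omega
    obtain ⟨i, hiI, hival⟩ := htail l le_rfl (by omega)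
    have hmem : ρ i ∈ Subgroup.closure (ρ '' I) := Subgroup.subset_closure ⟨i, hiI, rfl⟩
    have hswap : ρ i = Equiv.swap (⟨h+l, by omega⟩ : Fin (r+h+1)) ⟨h+l+1, by omega⟩ := by
      rw [hhigh i (by omega)]
      exact swap_eq_of_val _ _ _ _ (show h + (i:ℕ) = h + l by omega)
        (show h + (i:ℕ) + 1 = h + l + 1 by omega)
    rwa [hswap] at hmem
  | succ d IHd =>
    intro l hld hl1 htail
    have hlh : l ≤ h := by omega
    -- u = swap (h+l+1, h+l+2) ∈ H by IH
    have hu : Equiv.swap (⟨h+(l+1), by omega⟩ : Fin (r+h+1)) ⟨h+(l+1)+1, by omega⟩ ∈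
        Subgroup.closure (ρ '' I) :=
      IHd (l+1) (by omega) (by omega) (fun m hm1 hm2 => htail m (by omega) hm2)
    obtain ⟨i, hiI, hival⟩ := htail l le_rfl (by omega)
    have hmem : ρ i ∈ Subgroup.closure (ρ '' I) := Subgroup.subset_closure ⟨i, hiI, rfl⟩
    set a : Fin (r+h+1) := ⟨h+l, by omega⟩ with ha
    set b : Fin (r+h+1) := ⟨h+l+1, by omega⟩ with hb
    set c : Fin (r+h+1) := ⟨h+l+2, by omega⟩ with hc
    have hav : (a:ℕ) = h+l := rfl
    have hbv : (b:ℕ) = h+l+1 := rfl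
    have hcv : (c:ℕ) = h+l+2 := rfl
    have hu' : Equiv.swap b c ∈ Subgroup.closure (ρ '' I) := by
      have e : Equiv.swap (⟨h+(l+1), by omega⟩ : Fin (r+h+1)) ⟨h+(l+1)+1, by omega⟩ =
          Equiv.swap b c := swap_eq_of_val _ _ _ _
            (by simp only [Fin.val_mk]; omega) (by simp only [Fin.val_mk]; omega)
      rwa [e] at hu
    -- ρ i b = a, ρ i c = c
    have hfb : ρ i b = a := by
      apply Fin.val_injective
      rw [hact i b]
      have A := act_spec h (i:ℕ) (b:ℕ)
      omega
    have hfc : ρ i c = c := by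
      apply Fin.val_injective
      rw [hact i c]
      have A := act_spec h (i:ℕ) (c:ℕ)
      omega
    have e1 : ρ i * Equiv.swap b c * (ρ i)⁻¹ = Equiv.swap a c := by
      rw [← Equiv.swap_apply_apply (ρ i) b c, hfb, hfc]
    have hac : Equiv.swap a c ∈ Subgroup.closure (ρ '' I) := by
      rw [← e1]
      exact Subgroup.mul_mem _ (Subgroup.mul_mem _ hmem hu') (Subgroup.inv_mem _ hmem)
    have e2 : Equiv.swap a c * Equiv.swap b c * (Equiv.swap a c)⁻¹ = Equiv.swap a b := by
      rw [← Equiv.swap_apply_apply (Equiv.swap a c) b c]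
      rw [Equiv.swap_apply_of_ne_of_ne (a := a) (b := c)
        (Fin.ne_of_val_ne (show (b:ℕ) ≠ (a:ℕ) by omega))
        (Fin.ne_of_val_ne (show (b:ℕ) ≠ (c:ℕ) by omega))]
      rw [Equiv.swap_apply_right]
      exact Equiv.swap_comm b a
    rw [← e2]
    exact Subgroup.mul_mem _ (Subgroup.mul_mem _ hac hu') (Subgroup.inv_mem _ hac)

end
end CPRSrh

namespace CPRSrh

section
variable {r h : ℕ} {ρ : Fin r → Equiv.Perm (Fin (r + h + 1))}

set_option maxHeartbeats 1600000 in
theorem CC_le_closure (hr : 3 ≤ r) (h1 : 1 ≤ h) (h2 : h ≤ r - 2)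
    (hzero : ∀ l : Fin r, (l : ℕ) = 0 →
      ρ l = Equiv.swap ⟨h, by have := ρ; omega⟩ ⟨h + 1, by have := ρ; omega⟩)
    (hmid : ∀ l : Fin r, ∀ hl : 1 ≤ (l : ℕ) ∧ (l : ℕ) ≤ h,
      ρ l = Equiv.swap ⟨h - (l : ℕ), by have := ρ; omega⟩ ⟨h - (l : ℕ) + 1, by have := ρ; omega⟩ *
        Equiv.swap ⟨h + (l : ℕ), by have := ρ; omega⟩ ⟨h + (l : ℕ) + 1, by have := ρ; omega⟩)
    (hhigh : ∀ l : Fin r, ∀ hl : h + 1 ≤ (l : ℕ),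
      ρ l = Equiv.swap ⟨h + (l : ℕ), by have := ρ; omega⟩ ⟨h + (l : ℕ) + 1, by have := ρ; omega⟩)
    (hact : ∀ (l : Fin r) (x : Fin (r + h + 1)), ((ρ l) x : ℕ) = act h (l : ℕ) (x : ℕ))
    (I : Set (Fin r)) :
    CC h (r+h+1) (Fin.val '' I) ≤ Subgroup.closure (ρ '' I) := by
  have hn : 2*h+1 < r+h+1 := by omega
  suffices K : ∀ N, ∀ g : Equiv.Perm (Fin (r+h+1)), g ∈ CC h (r+h+1) (Fin.val '' I) →
      invc g ≤ N → g ∈ Subgroup.closure (ρ '' I) by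
    intro g hg; exact K (invc g) g hg le_rfl
  intro N
  induction N using Nat.strong_induction_on with
  | _ N IH =>
    intro g hg hN
    by_cases hone : g = 1
    · exact hone ▸ Subgroup.one_mem _
    have hgrel := (mem_CC.mp hg).1
    have hgcz := (mem_CC.mp hg).2
    obtain ⟨j, hjn, hlabS, hdesc⟩ := exists_descent hgrel hone
    set aj : Fin (r+h+1) := ⟨j, by omega⟩ with haj
    set bj : Fin (r+h+1) := ⟨j+1, hjn⟩ with hbj
    have hajv : (aj:ℕ) = j := rfl
    have hbjv : (bj:ℕ) = j+1 := rfl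
    have hdesc' : ((g bj):ℕ) < ((g aj):ℕ) := hdesc
    have hNpos : 0 < invc g := invc_pos g aj bj (by omega) hdesc'
    have step : ∀ M : Equiv.Perm (Fin (r+h+1)), M ∈ Subgroup.closure (ρ '' I) →
        invc (g * M) < invc g → g ∈ Subgroup.closure (ρ '' I) := by
      intro M hMH hdec
      have hMCC : M ∈ CC h (r+h+1) (Fin.val '' I) := closure_le_CC hact h1 hn I hMH
      have hgM : g * M ∈ CC h (r+h+1) (Fin.val '' I) := Subgroup.mul_mem _ hg hMCC
      have hrec : g * M ∈ Subgroup.closure (ρ '' I) :=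
        IH (N-1) (by omega) (g*M) hgM (by omega)
      have hgdec : g = (g * M) * M⁻¹ := by group
      rw [hgdec]
      exact Subgroup.mul_mem _ hrec (Subgroup.inv_mem _ hMH)
    set L := lab h j with hL
    have hlab := lab_spec h j
    obtain ⟨i, hiI, hival⟩ := hlabS
    have hmem : ρ i ∈ Subgroup.closure (ρ '' I) := Subgroup.subset_closure ⟨i, hiI, rfl⟩
    rcases (by omega : L = 0 ∨ (1 ≤ L ∧ L ≤ h) ∨ h+1 ≤ L) with hc0 | hcm | hch
    · -- L = 0, j = h
      have hjh : j = h := by omega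
      have hform : ρ i = Equiv.swap aj bj := by
        rw [hzero i (by omega)]
        exact swap_eq_of_val _ _ _ _ (by simp only [Fin.val_mk]; omega)
          (by simp only [Fin.val_mk]; omega)
      apply step (ρ i) hmem
      rw [hform]
      have s := invc_mul_swap g aj bj (by omega) hdesc'
      omega
    · -- middle labels
      have hL1 : 1 ≤ L := hcm.1
      have hLh : L ≤ h := hcm.2
      have hcase : j = h - L ∨ j = h + L := by omega
      obtain ⟨pa, hpav⟩ : ∃ z : Fin (r+h+1), (z:ℕ) = h - L := ⟨⟨h-L, by omega⟩, rfl⟩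
      obtain ⟨pb, hpbv⟩ : ∃ z : Fin (r+h+1), (z:ℕ) = h - L + 1 := ⟨⟨h-L+1, by omega⟩, rfl⟩
      obtain ⟨pc, hpcv⟩ : ∃ z : Fin (r+h+1), (z:ℕ) = h + L := ⟨⟨h+L, by omega⟩, rfl⟩
      obtain ⟨pd, hpdv⟩ : ∃ z : Fin (r+h+1), (z:ℕ) = h + L + 1 := ⟨⟨h+L+1, by omega⟩, rfl⟩
      have hρ : ρ i = Equiv.swap pa pb * Equiv.swap pc pd := by
        rw [hmid i ⟨by omega, by omega⟩]
        congr 1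
        · exact swap_eq_of_val _ _ _ _ (by simp only [Fin.val_mk]; omega)
            (by simp only [Fin.val_mk]; omega)
        · exact swap_eq_of_val _ _ _ _ (by simp only [Fin.val_mk]; omega)
            (by simp only [Fin.val_mk]; omega)
      by_cases htail : ∀ m, L ≤ m → m ≤ h+1 → m ∈ Fin.val '' I
      · -- unconstrained: pure swap at (j, j+1) is in the closure
        have hA : Equiv.swap pc pd ∈ Subgroup.closure (ρ '' I) := by
          have hA0 := t_mem hr h1 h2 hmid hhigh hact I (h+1-L) L (by omega) (by omega) htail
          have e : Equiv.swap (⟨h+L, by omega⟩ : Fin (r+h+1)) ⟨h+L+1, by omega⟩ =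
              Equiv.swap pc pd :=
            swap_eq_of_val _ _ _ _ (by simp only [Fin.val_mk]; omega)
              (by simp only [Fin.val_mk]; omega)
          rwa [e] at hA0
        have hSwapJ : Equiv.swap aj bj ∈ Subgroup.closure (ρ '' I) := by
          rcases hcase with hjl | hjr
          · -- j = h - L : swap aj bj = swap pa pb = ρ i * (swap pc pd)⁻¹
            have hPab : Equiv.swap pa pb = ρ i * (Equiv.swap pc pd)⁻¹ := by
              rw [hρ]; group
            have : Equiv.swap pa pb ∈ Subgroup.closure (ρ '' I) := by
              rw [hPab]
              exact Subgroup.mul_mem _ hmem (Subgroup.inv_mem _ hA)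
            have e : Equiv.swap pa pb = Equiv.swap aj bj :=
              swap_eq_of_val _ _ _ _ (by omega) (by omega)
            rwa [e] at this
          · have e : Equiv.swap pc pd = Equiv.swap aj bj :=
              swap_eq_of_val _ _ _ _ (by omega) (by omega)
            rwa [e] at hA
        apply step _ hSwapJ
        have s := invc_mul_swap g aj bj (by omega) hdesc'
        omega
      · -- constrained: use the double transposition and the tau-equivariance
        have czR : CZ h (Fin.val '' I) (h + L) :=
          ⟨L, ⟨i, hiI, hival⟩, by omega, by have := kk_spec h (h+L); omega, htail⟩
        have czR2 : CZ h (Fin.val '' I) (h + L + 1) :=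
          ⟨L, ⟨i, hiI, hival⟩, by omega, by have := kk_spec h (h+L+1); omega, htail⟩
        have czR' : CZ h (Fin.val '' I) ((pc : Fin (r+h+1)):ℕ) := by rw [hpcv]; exact czR
        have czR2' : CZ h (Fin.val '' I) ((pd : Fin (r+h+1)):ℕ) := by rw [hpdv]; exact czR2
        have bR : ((g pc):ℕ) ≤ 2*h+1 := Prel_CZ_bound (hgrel pc) czR'
        have bR2 : ((g pd):ℕ) ≤ 2*h+1 := Prel_CZ_bound (hgrel pd) czR2'
        have hE1 := hgcz pc czR'
        have hE2 := hgcz pd czR2'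
        have ht1 : tauF h pc = pb := by
          apply Fin.val_injective
          rw [tauF_val hn]
          have := tau_spec h ((pc:Fin (r+h+1)):ℕ)
          omega
        have ht2 : tauF h pd = pa := by
          apply Fin.val_injective
          rw [tauF_val hn]
          have := tau_spec h ((pd:Fin (r+h+1)):ℕ)
          omega
        rw [ht1] at hE1
        rw [ht2] at hE2
        have e1 : ((g pb):ℕ) = 2*h+1 - ((g pc):ℕ) := by
          have hv := congrArg Fin.val hE1
          rw [tauF_val hn] at hv
          have ht := tau_spec h ((g pc):ℕ)
          omega
        have e2 : ((g pa):ℕ) = 2*h+1 - ((g pd):ℕ) := by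
          have hv := congrArg Fin.val hE2
          rw [tauF_val hn] at hv
          have ht := tau_spec h ((g pd):ℕ)
          omega
        have dR : ((g pd):ℕ) < ((g pc):ℕ) := by
          rcases hcase with hjl | hjr
          · have eaj : aj = pa := Fin.val_injective (by omega)
            have ebj : bj = pb := Fin.val_injective (by omega)
            rw [eaj, ebj] at hdesc'
            omega
          · have eaj : aj = pc := Fin.val_injective (by omega)
            have ebj : bj = pd := Fin.val_injective (by omega)
            rw [eaj, ebj] at hdesc'
            exact hdesc'
        have dL : ((g pb):ℕ) < ((g pa):ℕ) := by omega
        have hPc : Equiv.swap pa pb pc = pc :=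
          Equiv.swap_apply_of_ne_of_ne (Fin.ne_of_val_ne (by omega))
            (Fin.ne_of_val_ne (by omega))
        have hPd : Equiv.swap pa pb pd = pd :=
          Equiv.swap_apply_of_ne_of_ne (Fin.ne_of_val_ne (by omega))
            (Fin.ne_of_val_ne (by omega))
        apply step (ρ i) hmem
        rw [hρ, ← mul_assoc]
        have s1 := invc_mul_swap g pa pb (by omega) dL
        have s2 : invc (g * Equiv.swap pa pb * Equiv.swap pc pd) + 1 =
            invc (g * Equiv.swap pa pb) := by
          apply invc_mul_swap (g * Equiv.swap pa pb) pc pd (by omega)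
          simp only [Equiv.Perm.mul_apply, hPc, hPd]
          exact dR
        omega
    · -- high labels, j = h + L
      have hjh : j = h + L := by omega
      have hform : ρ i = Equiv.swap aj bj := by
        rw [hhigh i (by omega)]
        exact swap_eq_of_val _ _ _ _ (by simp only [Fin.val_mk]; omega)
          (by simp only [Fin.val_mk]; omega)
      apply step (ρ i) hmem
      rw [hform]
      have s := invc_mul_swap g aj bj (by omega) hdesc'
      omega

end
end CPRSrh

open CPRSrh

/-- Proposition "counterexample1": the path CPR graph with successive edge labels
`h, h-1, …, 1, 0, 1, …, h, h+1, …, r-1` is a CPR graph for `S_{r+h+1}`. -/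
theorem path_graph_is_CPR_for_Srh1
    (r h : ℕ) (hr : 3 ≤ r) (h1 : 1 ≤ h) (h2 : h ≤ r - 2)
    (ρ : Fin r → Equiv.Perm (Fin (r + h + 1)))
    (hzero : ∀ l : Fin r, (l : ℕ) = 0 →
      ρ l = Equiv.swap ⟨h, by omega⟩ ⟨h + 1, by omega⟩)
    (hmid : ∀ l : Fin r, ∀ hl : 1 ≤ (l : ℕ) ∧ (l : ℕ) ≤ h,
      ρ l = Equiv.swap ⟨h - (l : ℕ), by omega⟩ ⟨h - (l : ℕ) + 1, by omega⟩ *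
        Equiv.swap ⟨h + (l : ℕ), by omega⟩ ⟨h + (l : ℕ) + 1, by omega⟩)
    (hhigh : ∀ l : Fin r, ∀ hl : h + 1 ≤ (l : ℕ),
      ρ l = Equiv.swap ⟨h + (l : ℕ), by omega⟩ ⟨h + (l : ℕ) + 1, by omega⟩) :
    (∀ i j : Fin r, (i : ℕ) + 2 ≤ (j : ℕ) ∨ (j : ℕ) + 2 ≤ (i : ℕ) →
      (ρ i * ρ j) ^ 2 = 1) ∧
    (∀ I J : Set (Fin r),
      Subgroup.closure (ρ '' I) ⊓ Subgroup.closure (ρ '' J) =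
        Subgroup.closure (ρ '' (I ∩ J))) ∧
    Subgroup.closure (Set.range ρ) = (⊤ : Subgroup (Equiv.Perm (Fin (r + h + 1)))) := by
  have hact := act_spec_of hr h1 h2 hzero hmid hhigh
  have hn : 2*h+1 < r+h+1 := by omega
  refine ⟨string_prop hact h1, ?_, ?_⟩
  · intro I J
    apply le_antisymm
    · have k1 : Subgroup.closure (ρ '' I) ⊓ Subgroup.closure (ρ '' J) ≤
          CC h (r+h+1) (Fin.val '' I) ⊓ CC h (r+h+1) (Fin.val '' J) :=
        inf_le_inf (closure_le_CC hact h1 hn I) (closure_le_CC hact h1 hn J)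
      have k2 := CC_inter (h:=h) (n:=r+h+1) (S:=Fin.val '' I) (T:=Fin.val '' J)
      have k3 : Fin.val '' I ∩ Fin.val '' J = Fin.val '' (I ∩ J) :=
        (Set.image_inter Fin.val_injective).symm
      have k4 := CC_le_closure hr h1 h2 hzero hmid hhigh hact (I ∩ J)
      intro g hgmem
      apply k4
      rw [← k3]
      exact k2 (k1 hgmem)
    · exact le_inf (Subgroup.closure_mono (Set.image_mono  Set.inter_subset_left))
        (Subgroup.closure_mono (Set.image_mono  Set.inter_subset_right))
  · apply le_antisymm le_top
    have e : Set.range ρ = ρ '' Set.univ := Set.image_univ.symm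
    rw [e]
    exact le_trans (top_le_CC h1 h2 hr)
      (CC_le_closure hr h1 h2 hzero hmid hhigh hact Set.univ)
end

section
/- Let r ≥ 2 and 1 ≤ h ≤ r−1 be integers. On the set Fin (h+1) ⊕ Fin (r+1), define involutions ρ₀,…,ρ_{r−1} by: for 0 ≤ l ≤ h−1, ρ_l := (inl l, inl (l+1))·(inr l, inr (l+1)); and for h ≤ l ≤ r−1, ρ_l := (inr l, inr (l+1)); where (p, q) denotes the transposition Equiv.swap p q and inl, inr are the inclusions into the sum type. Then the family (ρ₀,…,ρ_{r−1}) satisfies the string property and the intersection property, and the generated subgroup is exactly the subgroup of all permutations preserving each summand: ⟨ρ₀,…,ρ_{r−1}⟩ = (Equiv.Perm.sumCongrHom (Fin (h+1)) (Fin (r+1))).range (a group isomorphic to S_{h+1} × S_{r+1}). -/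
open Sum

theorem Equiv.Perm.apply_inv_self {α : Type*} (f : Equiv.Perm α) (x : α) : f (f⁻¹ x) = x :=
  f.apply_symm_apply x

theorem Equiv.Perm.inv_apply_self {α : Type*} (f : Equiv.Perm α) (x : α) : f⁻¹ (f x) = x :=
  f.symm_apply_apply x

namespace SCG

open Equiv Equiv.Perm

def EE {r : ℕ} (I : Set (Fin r)) : Set ℕ := {l | ∃ hl : l < r, (⟨l, hl⟩ : Fin r) ∈ I}
def Reach (E : Set ℕ) (x y : ℕ) : Prop := ∀ l, min x y ≤ l → l < max x y → l ∈ E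
lemma Reach.rfl {E : Set ℕ} {x : ℕ} : Reach E x x := fun _ h1 h2 => (by omega : False).elim
lemma Reach.symm {E : Set ℕ} {x y : ℕ} (h : Reach E x y) : Reach E y x :=
  fun l h1 h2 => h l (by omega) (by omega)
lemma Reach.trans {E : Set ℕ} {x y z : ℕ} (h1 : Reach E x y) (h2 : Reach E y z) :
    Reach E x z := by
  intro l hl1 hl2
  rcases (show min x y ≤ l ∧ l < max x y ∨ min y z ≤ l ∧ l < max y z by omega) with ⟨a, b⟩ | ⟨a, b⟩
  · exact h1 l a b
  · exact h2 l a b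
def Low (h : ℕ) (E : Set ℕ) (x : ℕ) : Prop := ∀ y, Reach E x y → y ≤ h
lemma Low.of_reach {h : ℕ} {E : Set ℕ} {x y : ℕ} (hx : Low h E x) (hxy : Reach E x y) :
    Low h E y := fun z hz => hx z (hxy.trans hz)
def swapSet (E : Set ℕ) (n : ℕ) : Set (Perm (Fin (n + 1))) :=
  {q | ∃ l, l ∈ E ∧ ∃ hl : l + 1 ≤ n, q = Equiv.swap ⟨l, by omega⟩ ⟨l + 1, by omega⟩}

lemma mem_closure_swapSet (E : Set ℕ) (n : ℕ) (π : Perm (Fin (n + 1)))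
    (hπ : ∀ x : Fin (n + 1), Reach E (x : ℕ) ((π x : Fin (n + 1)) : ℕ)) :
    π ∈ Subgroup.closure (swapSet E n) := by
  suffices key : ∀ M : ℕ, ∀ π : Perm (Fin (n + 1)),
      (∀ x : Fin (n + 1), Reach E (x : ℕ) ((π x : Fin (n + 1)) : ℕ)) →
      (∀ x : Fin (n + 1), π x ≠ x → (x : ℕ) < M) → π ∈ Subgroup.closure (swapSet E n) by
    exact key (n + 1) π hπ fun x _ => x.isLt
  intro M
  induction M with
  | zero =>
    intro π _ hmv
    have hπ1 : π = 1 := by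
      ext x
      simp only [Perm.one_apply]
      by_contra hx
      exact absurd (hmv x (fun hc => hx (congrArg Fin.val hc))) (by omega)
    rw [hπ1]; exact Subgroup.one_mem _
  | succ M ih =>
    intro π hπ hmv
    by_cases hMn : M < n + 1
    · suffices inner : ∀ d : ℕ, ∀ π : Perm (Fin (n + 1)),
          (∀ x : Fin (n + 1), Reach E (x : ℕ) ((π x : Fin (n + 1)) : ℕ)) →
          (∀ x : Fin (n + 1), π x ≠ x → (x : ℕ) < M + 1) →
          M ≤ ((π⁻¹ ⟨M, hMn⟩ : Fin (n + 1)) : ℕ) + d → π ∈ Subgroup.closure (swapSet E n) by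
        exact inner M π hπ hmv (by omega)
      intro d
      induction d with
      | zero =>
        intro π hπ hmv hd
        have h1 : ((π⁻¹ ⟨M, hMn⟩ : Fin (n + 1)) : ℕ) ≤ M := by
          by_contra hgt
          push_neg at hgt
          have hne : π (π⁻¹ ⟨M, hMn⟩) ≠ π⁻¹ ⟨M, hMn⟩ := by
            rw [Equiv.Perm.apply_inv_self]
            intro hEq
            have h2 := congrArg Fin.val hEq
            simp only [Fin.val_mk] at h2
            omega
          have := hmv _ hne; omega
        have hfixinv : π⁻¹ ⟨M, hMn⟩ = ⟨M, hMn⟩ := Fin.ext (by simp only [Fin.val_mk]; omega)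
        have hfix : π ⟨M, hMn⟩ = ⟨M, hMn⟩ := by
          conv_lhs => rw [← hfixinv]
          exact Equiv.Perm.apply_inv_self π _
        apply ih π hπ
        intro x hx
        have hlt := hmv x hx
        rcases Nat.lt_or_ge (x : ℕ) M with h | h
        · exact h
        · exact absurd hfix (by rwa [show (⟨M, hMn⟩ : Fin (n + 1)) = x from
            Fin.ext (by simp only [Fin.val_mk]; omega)])
      | succ d ihd =>
        intro π hπ hmv hd
        by_cases hfixinv : π⁻¹ ⟨M, hMn⟩ = ⟨M, hMn⟩
        · have hfix : π ⟨M, hMn⟩ = ⟨M, hMn⟩ := by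
            conv_lhs => rw [← hfixinv]
            exact Equiv.Perm.apply_inv_self π _
          apply ih π hπ
          intro x hx
          have hlt := hmv x hx
          rcases Nat.lt_or_ge (x : ℕ) M with h | h
          · exact h
          · exact absurd hfix (by rwa [show (⟨M, hMn⟩ : Fin (n + 1)) = x from
              Fin.ext (by simp only [Fin.val_mk]; omega)])
        · obtain ⟨y, hπy⟩ : ∃ y : Fin (n + 1), π y = ⟨M, hMn⟩ := ⟨π⁻¹ ⟨M, hMn⟩,
            Equiv.Perm.apply_inv_self π _⟩
          have hyinv : π⁻¹ ⟨M, hMn⟩ = y := by rw [Equiv.Perm.inv_eq_iff_eq, hπy]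
          rw [hyinv] at hd hfixinv
          have hyM : (y : ℕ) ≤ M := by
            by_contra hgt
            push_neg at hgt
            have hne : π y ≠ y := by
              rw [hπy]; intro hEq
              have h2 := congrArg Fin.val hEq
              simp only [Fin.val_mk] at h2; omega
            have := hmv _ hne; omega
          have hyMlt : (y : ℕ) < M := by
            rcases Nat.lt_or_ge (y : ℕ) M with h | h
            · exact h
            · exact absurd (Fin.ext (by simp only [Fin.val_mk]; omega) : y = ⟨M, hMn⟩) hfixinv
          have hedge : (y : ℕ) ∈ E := by
            have hR := hπ y
            rw [hπy] at hR
            exact hR (y : ℕ) (by simp only [Fin.val_mk]; omega) (by simp only [Fin.val_mk]; omega)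
          have hy1 : (y : ℕ) + 1 < n + 1 := by omega
          have hyne : y ≠ (⟨(y : ℕ) + 1, hy1⟩ : Fin (n + 1)) := by
            intro hEq; have := congrArg Fin.val hEq; simp only [Fin.val_mk] at this; omega
          set s := Equiv.swap y (⟨(y : ℕ) + 1, hy1⟩ : Fin (n + 1)) with hs
          have hsmem : s ∈ swapSet E n := by
            refine ⟨(y : ℕ), hedge, by omega, ?_⟩
            rw [hs]
          have hss : s * s = 1 := Equiv.swap_mul_self _ _
          set π' := π * s with hπ'
          have happ : ∀ x, π' x = π (s x) := fun x => Equiv.Perm.mul_apply π s x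
          have hsy : s y = ⟨(y : ℕ) + 1, hy1⟩ := Equiv.swap_apply_left _ _
          have hsy1 : s ⟨(y : ℕ) + 1, hy1⟩ = y := Equiv.swap_apply_right _ _
          have hsx : ∀ x : Fin (n + 1), x ≠ y → x ≠ ⟨(y : ℕ) + 1, hy1⟩ → s x = x :=
            fun x h1 h2 => Equiv.swap_apply_of_ne_of_ne h1 h2
          have hπ'R : ∀ x : Fin (n + 1), Reach E (x : ℕ) ((π' x : Fin (n + 1)) : ℕ) := by
            intro x
            by_cases hx1 : x = y
            · subst hx1
              rw [happ, hsy]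
              intro l hl1 hl2
              by_cases hly : l = (x : ℕ)
              · rwa [hly]
              · have hR := hπ ⟨(x : ℕ) + 1, hy1⟩
                simp only [Fin.val_mk] at hR
                exact hR l (by omega) (by omega)
            · by_cases hx2 : x = ⟨(y : ℕ) + 1, hy1⟩
              · subst hx2
                rw [happ, hsy1, hπy]
                have hR := hπ y
                rw [hπy] at hR
                simp only [Fin.val_mk] at hR ⊢
                intro l hl1 hl2
                exact hR l (by omega) (by omega)
              · rw [happ, hsx x hx1 hx2]; exact hπ x
          have hπ'mv : ∀ x : Fin (n + 1), π' x ≠ x → (x : ℕ) < M + 1 := by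
            intro x hx
            by_cases hx1 : x = y
            · subst hx1; omega
            · by_cases hx2 : x = ⟨(y : ℕ) + 1, hy1⟩
              · subst hx2; simp only [Fin.val_mk]; omega
              · rw [happ, hsx x hx1 hx2] at hx; exact hmv x hx
          have hπ'inv : π'⁻¹ ⟨M, hMn⟩ = ⟨(y : ℕ) + 1, hy1⟩ := by
            rw [Equiv.Perm.inv_eq_iff_eq, happ, hsy1, hπy]
          have hmem' := ihd π' hπ'R hπ'mv (by rw [hπ'inv]; simp only [Fin.val_mk]; omega)
          have hfin : π = π' * s := by rw [hπ', mul_assoc, hss, mul_one]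
          rw [hfin]
          exact Subgroup.mul_mem _ hmem' (Subgroup.subset_closure hsmem)
    · exact ih π hπ fun x hx => lt_of_lt_of_le x.isLt (by omega)

lemma swap_val {n : ℕ} (a b : ℕ) (ha : a < n + 1) (hb : b < n + 1) (x : Fin (n + 1)) :
    ((Equiv.swap ⟨a, ha⟩ ⟨b, hb⟩ x : Fin (n + 1)) : ℕ) =
      if (x : ℕ) = a then b else if (x : ℕ) = b then a else (x : ℕ) := by
  by_cases hxa : (x : ℕ) = a
  · rw [show x = ⟨a, ha⟩ from Fin.ext hxa, Equiv.swap_apply_left]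
    simp [hxa]
  · by_cases hxb : (x : ℕ) = b
    · rw [show x = ⟨b, hb⟩ from Fin.ext hxb, Equiv.swap_apply_right]
      simp only [Fin.val_mk]
      split_ifs <;> omega
    · rw [Equiv.swap_apply_of_ne_of_ne (fun hc => hxa (congrArg Fin.val hc))
        (fun hc => hxb (congrArg Fin.val hc))]
      simp [hxa, hxb]

/-- the pair of permutations corresponding to the generator `ρ l` -/
def gg (r h : ℕ) (l : Fin r) : Perm (Fin (h + 1)) × Perm (Fin (r + 1)) :=
  (if hl : (l : ℕ) + 1 ≤ h then
      Equiv.swap ⟨(l : ℕ), Nat.lt_succ_of_le (Nat.le_of_succ_le hl)⟩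
        ⟨(l : ℕ) + 1, Nat.lt_succ_of_le hl⟩ else 1,
   Equiv.swap ⟨(l : ℕ), Nat.lt_succ_of_lt l.isLt⟩ ⟨(l : ℕ) + 1, Nat.succ_lt_succ l.isLt⟩)

/-- the subgroup of pairs compatible with the edge set of `I` -/
def SQ (r h : ℕ) (hh : h + 1 ≤ r) (I : Set (Fin r)) :
    Subgroup (Perm (Fin (h + 1)) × Perm (Fin (r + 1))) where
  carrier := {p | (∀ x : Fin (r + 1), Reach (EE I) (x : ℕ) ((p.2 x : Fin (r + 1)) : ℕ)) ∧
    (∀ x : Fin (h + 1), Reach (EE I) (x : ℕ) ((p.1 x : Fin (h + 1)) : ℕ)) ∧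
    ∀ x : Fin (h + 1), Low h (EE I) (x : ℕ) →
      ((p.1 x : Fin (h + 1)) : ℕ) = ((p.2 (Fin.castLE (by omega) x) : Fin (r + 1)) : ℕ)}
  one_mem' := by
    refine ⟨fun x => ?_, fun x => ?_, fun x _ => ?_⟩
    · simp only [Prod.snd_one, Perm.one_apply]; exact Reach.rfl
    · simp only [Prod.fst_one, Perm.one_apply]; exact Reach.rfl
    · simp only [Prod.fst_one, Prod.snd_one, Perm.one_apply, Fin.coe_castLE]
  mul_mem' := by
    rintro a b ⟨ha2, ha1, hac⟩ ⟨hb2, hb1, hbc⟩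
    refine ⟨fun x => ?_, fun x => ?_, fun x hlow => ?_⟩
    · simp only [Prod.snd_mul, Perm.mul_apply]
      exact (hb2 x).trans (ha2 _)
    · simp only [Prod.fst_mul, Perm.mul_apply]
      exact (hb1 x).trans (ha1 _)
    · simp only [Prod.fst_mul, Prod.snd_mul, Perm.mul_apply]
      have e1 := hbc x hlow
      have hlow' : Low h (EE I) ((b.1 x : Fin (h + 1)) : ℕ) := hlow.of_reach (hb1 x)
      have e2 := hac _ hlow'
      have hcast : Fin.castLE (by omega : h + 1 ≤ r + 1) (b.1 x) =
          b.2 (Fin.castLE (by omega) x) :=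
        Fin.ext (by simpa [Fin.coe_castLE] using e1)
      rw [← hcast]; exact e2
  inv_mem' := by
    rintro a ⟨ha2, ha1, hac⟩
    refine ⟨fun x => ?_, fun x => ?_, fun x hlow => ?_⟩
    · simp only [Prod.snd_inv]
      have := ha2 (a.2⁻¹ x)
      rw [Perm.apply_inv_self] at this
      exact this.symm
    · simp only [Prod.fst_inv]
      have := ha1 (a.1⁻¹ x)
      rw [Perm.apply_inv_self] at this
      exact this.symm
    · simp only [Prod.fst_inv, Prod.snd_inv]
      have hr : Reach (EE I) (x : ℕ) ((a.1⁻¹ x : Fin (h + 1)) : ℕ) := by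
        have := ha1 (a.1⁻¹ x)
        rw [Perm.apply_inv_self] at this
        exact this.symm
      have hlow' := hlow.of_reach hr
      have e := hac _ hlow'
      rw [Perm.apply_inv_self] at e
      have hkey : a.2 (Fin.castLE (by omega : h + 1 ≤ r + 1) (a.1⁻¹ x)) =
          Fin.castLE (by omega) x :=
        Fin.ext (by simpa [Fin.coe_castLE] using e.symm)
      rw [← hkey, Perm.inv_apply_self]
      simp [Fin.coe_castLE]

lemma gg_mem_SQ (r h : ℕ) (hh : h + 1 ≤ r) {I : Set (Fin r)} {l : Fin r} (hlI : l ∈ I) :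
    gg r h l ∈ SQ r h hh I := by
  have hE : (l : ℕ) ∈ EE I := ⟨l.isLt, by simpa using hlI⟩
  have hreach1 : Reach (EE I) (l : ℕ) ((l : ℕ) + 1) := by
    intro m hm1 hm2
    have : m = (l : ℕ) := by omega
    rwa [this]
  refine ⟨fun x => ?_, fun x => ?_, fun x hlow => ?_⟩
  · simp only [gg]
    rw [swap_val]
    split_ifs with h1 h2
    · rw [h1]; exact hreach1
    · rw [h2]; exact hreach1.symm
    · exact Reach.rfl
  · simp only [gg]
    by_cases hlh : (l : ℕ) + 1 ≤ h
    · rw [dif_pos hlh, swap_val]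
      split_ifs with h1 h2
      · rw [h1]; exact hreach1
      · rw [h2]; exact hreach1.symm
      · exact Reach.rfl
    · rw [dif_neg hlh]
      simp only [Perm.one_apply]
      exact Reach.rfl
  · simp only [gg]
    by_cases hlh : (l : ℕ) + 1 ≤ h
    · rw [dif_pos hlh, swap_val, swap_val]
      simp only [Fin.coe_castLE]
    · rw [dif_neg hlh, swap_val]
      simp only [Perm.one_apply, Fin.coe_castLE]
      split_ifs with h1 h2
      · exfalso
        have hxl : (x : ℕ) = (l : ℕ) := h1
        have := hlow ((l : ℕ) + 1) (by rw [hxl]; exact hreach1)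
        omega
      · exfalso
        have := x.isLt
        omega
      · rfl

lemma closure_le_SQ (r h : ℕ) (hh : h + 1 ≤ r) (I : Set (Fin r)) :
    Subgroup.closure (gg r h '' I) ≤ SQ r h hh I := by
  rw [Subgroup.closure_le]
  rintro _ ⟨l, hlI, rfl⟩
  exact gg_mem_SQ r h hh hlI

lemma one_tk_mem (r h : ℕ) (I : Set (Fin r)) {l₀ y : ℕ} (hyr : y ≤ r)
    (hedges : ∀ k, l₀ ≤ k → k < y → k ∈ EE I) (hhy : h < y) :
    ∀ j k, ∀ hjk : k + 1 + j = y, l₀ ≤ k →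
      (((1 : Perm (Fin (h + 1))),
        Equiv.swap (⟨k, by omega⟩ : Fin (r + 1)) ⟨k + 1, by omega⟩) :
        Perm (Fin (h + 1)) × Perm (Fin (r + 1))) ∈
        Subgroup.closure (gg r h '' I) := by
  intro j
  induction j with
  | zero =>
    intro k hk hlk
    obtain ⟨hkr, hkI⟩ := hedges k hlk (by omega)
    have hne : ¬((k : ℕ) + 1 ≤ h) := by omega
    have hgg : gg r h ⟨k, hkr⟩ =
        (((1 : Perm (Fin (h + 1))),
          Equiv.swap (⟨k, by omega⟩ : Fin (r + 1)) ⟨k + 1, by omega⟩)) := by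
      simp only [gg, Fin.val_mk, dif_neg hne]
    rw [← hgg]
    exact Subgroup.subset_closure ⟨⟨k, hkr⟩, hkI, rfl⟩
  | succ j ihj =>
    intro k hk hlk
    have hkb : k + 2 < r + 1 := by omega
    have h1 := ihj (k + 1) (by omega) (by omega)
    obtain ⟨hkr, hkI⟩ := hedges k hlk (by omega)
    have hg : gg r h ⟨k, hkr⟩ ∈ Subgroup.closure (gg r h '' I) :=
      Subgroup.subset_closure ⟨⟨k, hkr⟩, hkI, rfl⟩
    set H := Subgroup.closure (gg r h '' I) with hH
    set tk : Perm (Fin (r + 1)) :=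
      Equiv.swap (⟨k, by omega⟩ : Fin (r + 1)) ⟨k + 1, by omega⟩ with htk
    set tk1 : Perm (Fin (r + 1)) :=
      Equiv.swap (⟨k + 1, by omega⟩ : Fin (r + 1)) ⟨k + 2, hkb⟩ with htk1
    have hgsnd : (gg r h ⟨k, hkr⟩).2 = tk := rfl
    -- first conjugation : (1, tk * tk1 * tk⁻¹) ∈ H
    have hc1 : gg r h ⟨k, hkr⟩ * ((1 : Perm (Fin (h + 1))), tk1) * (gg r h ⟨k, hkr⟩)⁻¹ =
        ((1 : Perm (Fin (h + 1))), tk * tk1 * tk⁻¹) := by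
      refine Prod.ext ?_ ?_
      · simp only [Prod.fst_mul, Prod.fst_inv, mul_one]
        group
      · simp only [Prod.snd_mul, Prod.snd_inv, hgsnd]
    have hm1 : (((1 : Perm (Fin (h + 1))), tk * tk1 * tk⁻¹) :
        Perm (Fin (h + 1)) × Perm (Fin (r + 1))) ∈ H := by
      rw [← hc1]
      exact H.mul_mem (H.mul_mem hg h1) (H.inv_mem hg)
    have he1 : tk * tk1 * tk⁻¹ =
        Equiv.swap (⟨k, by omega⟩ : Fin (r + 1)) ⟨k + 2, hkb⟩ := by
      rw [htk1, htk]
      rw [← Equiv.swap_apply_apply]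
      congr 1
      · exact Equiv.swap_apply_right _ _
      · exact Equiv.swap_apply_of_ne_of_ne
          (Fin.ne_of_val_ne (by simp only [Fin.val_mk]; omega))
          (Fin.ne_of_val_ne (by simp only [Fin.val_mk]; omega))
    -- second conjugation by (1, tk1)
    have hc2 : (((1 : Perm (Fin (h + 1))), tk1) : Perm (Fin (h + 1)) × Perm (Fin (r + 1))) *
        ((1 : Perm (Fin (h + 1))), tk * tk1 * tk⁻¹) * ((1 : Perm (Fin (h + 1))), tk1)⁻¹ =
        ((1 : Perm (Fin (h + 1))), tk1 * (tk * tk1 * tk⁻¹) * tk1⁻¹) := by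
      refine Prod.ext ?_ ?_
      · simp only [Prod.fst_mul, Prod.fst_inv, mul_one]
        group
      · simp only [Prod.snd_mul, Prod.snd_inv]
    have hm2 : (((1 : Perm (Fin (h + 1))), tk1 * (tk * tk1 * tk⁻¹) * tk1⁻¹) :
        Perm (Fin (h + 1)) × Perm (Fin (r + 1))) ∈ H := by
      rw [← hc2]
      have h1' : (((1 : Perm (Fin (h + 1))), tk1) :
          Perm (Fin (h + 1)) × Perm (Fin (r + 1))) ∈ H := h1
      exact H.mul_mem (H.mul_mem h1' hm1) (H.inv_mem h1')
    have he2 : tk1 * (tk * tk1 * tk⁻¹) * tk1⁻¹ = tk := by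
      rw [he1, htk1, ← Equiv.swap_apply_apply, htk]
      congr 1
      · exact Equiv.swap_apply_of_ne_of_ne
          (Fin.ne_of_val_ne (by simp only [Fin.val_mk]; omega))
          (Fin.ne_of_val_ne (by simp only [Fin.val_mk]; omega))
      · exact Equiv.swap_apply_right _ _
    rw [he2] at hm2
    exact hm2

lemma pair_swap_one_mem (r h : ℕ) (hh : h + 1 ≤ r) (I : Set (Fin r)) (l : ℕ)
    (hE : l ∈ EE I) (hlh : l + 1 ≤ h) (hnl : ¬ Low h (EE I) l) :
    ((Equiv.swap (⟨l, by omega⟩ : Fin (h + 1)) ⟨l + 1, by omega⟩,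
      (1 : Perm (Fin (r + 1)))) : Perm (Fin (h + 1)) × Perm (Fin (r + 1))) ∈
      Subgroup.closure (gg r h '' I) := by
  simp only [Low, not_forall] at hnl
  obtain ⟨y, hy⟩ := hnl
  push_neg at hy
  obtain ⟨hreach, hy⟩ := hy
  have hly : l < y := by omega
  have hedges : ∀ k, l ≤ k → k < y → k ∈ EE I := by
    intro k h1 h2
    exact hreach k (by omega) (by omega)
  have hyr : y ≤ r := by
    obtain ⟨hlt, -⟩ := hedges (y - 1) (by omega) (by omega)
    omega
  have h1tl := one_tk_mem r h I hyr hedges (by omega) (y - 1 - l) l (by omega) le_rfl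
  obtain ⟨hlr, hlI⟩ := hE
  set H := Subgroup.closure (gg r h '' I) with hH
  have hgl : gg r h ⟨l, hlr⟩ ∈ H := Subgroup.subset_closure ⟨⟨l, hlr⟩, hlI, rfl⟩
  have hmem := H.mul_mem hgl (H.inv_mem h1tl)
  have hgg : gg r h ⟨l, hlr⟩ =
      ((Equiv.swap (⟨l, by omega⟩ : Fin (h + 1)) ⟨l + 1, by omega⟩,
        Equiv.swap (⟨l, by omega⟩ : Fin (r + 1)) ⟨l + 1, by omega⟩)) := by
    simp only [gg, Fin.val_mk, dif_pos hlh]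
  rw [hgg] at hmem
  have hfin : ((Equiv.swap (⟨l, by omega⟩ : Fin (h + 1)) ⟨l + 1, by omega⟩,
        Equiv.swap (⟨l, by omega⟩ : Fin (r + 1)) ⟨l + 1, by omega⟩) :
        Perm (Fin (h + 1)) × Perm (Fin (r + 1))) *
      (((1 : Perm (Fin (h + 1))),
        Equiv.swap (⟨l, by omega⟩ : Fin (r + 1)) ⟨l + 1, by omega⟩))⁻¹ =
      ((Equiv.swap (⟨l, by omega⟩ : Fin (h + 1)) ⟨l + 1, by omega⟩,
        (1 : Perm (Fin (r + 1))))) := by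
    refine Prod.ext ?_ ?_
    · simp only [Prod.fst_mul, Prod.fst_inv, inv_one, mul_one]
    · simp only [Prod.snd_mul, Prod.snd_inv]
      group
  rw [hfin] at hmem
  exact hmem

lemma SQ_le_closure (r h : ℕ) (hh : h + 1 ≤ r) (I : Set (Fin r)) :
    SQ r h hh I ≤ Subgroup.closure (gg r h '' I) := by
  intro p hp
  obtain ⟨hp2, hp1, hpc⟩ := hp
  have hτ : p.2 ∈ Subgroup.closure (swapSet (EE I) r) := mem_closure_swapSet _ _ _ hp2
  have hsub : swapSet (EE I) r ⊆
      (MonoidHom.snd (Perm (Fin (h + 1))) (Perm (Fin (r + 1)))) '' (gg r h '' I) := by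
    rintro q ⟨m, ⟨hmr, hmI⟩, hm1, rfl⟩
    exact ⟨gg r h ⟨m, hmr⟩, ⟨⟨m, hmr⟩, hmI, rfl⟩, rfl⟩
  have hτ' : p.2 ∈ Subgroup.map (MonoidHom.snd _ _) (Subgroup.closure (gg r h '' I)) := by
    rw [MonoidHom.map_closure]
    exact Subgroup.closure_mono hsub hτ
  obtain ⟨w, hwH, hw2⟩ := hτ'
  set q := p * w⁻¹ with hq
  have hqSQ : q ∈ SQ r h hh I := (SQ r h hh I).mul_mem ⟨hp2, hp1, hpc⟩
    ((SQ r h hh I).inv_mem (closure_le_SQ r h hh I hwH))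
  obtain ⟨hq2, hq1, hqc⟩ := hqSQ
  have hq2eq : q.2 = 1 := by
    simp only [hq, Prod.snd_mul, Prod.snd_inv]
    rw [show w.2 = p.2 from hw2]
    group
  have hq1E' : ∀ x : Fin (h + 1),
      Reach {m | m ∈ EE I ∧ m + 1 ≤ h ∧ ¬ Low h (EE I) m} (x : ℕ)
        ((q.1 x : Fin (h + 1)) : ℕ) := by
    intro x
    by_cases hfx : q.1 x = x
    · rw [hfx]; exact Reach.rfl
    · have hnl : ¬ Low h (EE I) (x : ℕ) := by
        intro hlw
        apply hfx
        apply Fin.ext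
        rw [hqc x hlw, hq2eq]
        simp [Fin.coe_castLE]
      intro m hm1 hm2
      have hmE : m ∈ EE I := hq1 x m hm1 hm2
      refine ⟨hmE, ?_, ?_⟩
      · have hx := x.isLt
        have hqx := (q.1 x).isLt
        omega
      · have hrmx : Reach (EE I) m (x : ℕ) := by
          intro t ht1 ht2
          exact hq1 x t (by omega) (by omega)
        exact fun hlowm => hnl (hlowm.of_reach hrmx)
  have hσ : q.1 ∈ Subgroup.closure
      (swapSet {m | m ∈ EE I ∧ m + 1 ≤ h ∧ ¬ Low h (EE I) m} h) :=
    mem_closure_swapSet _ _ _ hq1E'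
  have hgen : ∀ s ∈ swapSet {m | m ∈ EE I ∧ m + 1 ≤ h ∧ ¬ Low h (EE I) m} h,
      ((s, (1 : Perm (Fin (r + 1)))) : Perm (Fin (h + 1)) × Perm (Fin (r + 1))) ∈
        Subgroup.closure (gg r h '' I) := by
    rintro s ⟨m, ⟨hmE, hmh, hml⟩, hm1, rfl⟩
    exact pair_swap_one_mem r h hh I m hmE hmh hml
  have hq1mem : ((q.1, (1 : Perm (Fin (r + 1)))) :
      Perm (Fin (h + 1)) × Perm (Fin (r + 1))) ∈ Subgroup.closure (gg r h '' I) := by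
    have hmap := Subgroup.mem_map_of_mem
      (MonoidHom.inl (Perm (Fin (h + 1))) (Perm (Fin (r + 1)))) hσ
    rw [MonoidHom.map_closure] at hmap
    exact (Subgroup.closure_le _).2 (by rintro _ ⟨s, hs, rfl⟩; exact hgen s hs) hmap
  have hpq : p = (q.1, (1 : Perm (Fin (r + 1)))) * w := by
    have hq1' : ((q.1, (1 : Perm (Fin (r + 1)))) :
        Perm (Fin (h + 1)) × Perm (Fin (r + 1))) = q := Prod.ext rfl hq2eq.symm
    rw [hq1', hq, inv_mul_cancel_right]
  rw [hpq]
  exact Subgroup.mul_mem _ hq1mem hwH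

lemma EE_inter (r : ℕ) (I J : Set (Fin r)) : EE (I ∩ J) = EE I ∩ EE J := by
  ext m
  constructor
  · rintro ⟨hm, hIJ⟩
    exact ⟨⟨hm, hIJ.1⟩, ⟨hm, hIJ.2⟩⟩
  · rintro ⟨⟨hm, hI⟩, ⟨hm2, hJ⟩⟩
    exact ⟨hm, hI, hJ⟩

lemma SQ_inter (r h : ℕ) (hh : h + 1 ≤ r) (I J : Set (Fin r)) :
    SQ r h hh I ⊓ SQ r h hh J ≤ SQ r h hh (I ∩ J) := by
  rintro p ⟨⟨hI2, hI1, hIc⟩, ⟨hJ2, hJ1, hJc⟩⟩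
  refine ⟨fun x => ?_, fun x => ?_, fun x hlw => ?_⟩
  · intro m h1 h2
    rw [EE_inter]
    exact ⟨hI2 x m h1 h2, hJ2 x m h1 h2⟩
  · intro m h1 h2
    rw [EE_inter]
    exact ⟨hI1 x m h1 h2, hJ1 x m h1 h2⟩
  · by_cases hLI : Low h (EE I) (x : ℕ)
    · exact hIc x hLI
    · by_cases hLJ : Low h (EE J) (x : ℕ)
      · exact hJc x hLJ
      · exfalso
        simp only [Low, not_forall] at hLI hLJ
        obtain ⟨y1, hy1⟩ := hLI
        obtain ⟨y2, hy2⟩ := hLJ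
        push_neg at hy1 hy2
        obtain ⟨hr1, hy1⟩ := hy1
        obtain ⟨hr2, hy2⟩ := hy2
        have hxh := x.isLt
        have hre : Reach (EE (I ∩ J)) (x : ℕ) (h + 1) := by
          intro m h1 h2
          rw [EE_inter]
          exact ⟨hr1 m (by omega) (by omega), hr2 m (by omega) (by omega)⟩
        have := hlw (h + 1) hre
        omega

lemma SQ_univ_mem (r h : ℕ) (hh : h + 1 ≤ r)
    (p : Perm (Fin (h + 1)) × Perm (Fin (r + 1))) : p ∈ SQ r h hh Set.univ := by
  refine ⟨fun x => ?_, fun x => ?_, fun x hlw => ?_⟩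
  · intro m h1 h2
    have hx := x.isLt
    have hpx := (p.2 x).isLt
    exact ⟨by omega, Set.mem_univ _⟩
  · intro m h1 h2
    have hx := x.isLt
    have hpx := (p.1 x).isLt
    exact ⟨by omega, Set.mem_univ _⟩
  · exfalso
    have hx := x.isLt
    have hre : Reach (EE (Set.univ : Set (Fin r))) (x : ℕ) (h + 1) := by
      intro m h1 h2
      exact ⟨by omega, Set.mem_univ _⟩
    have := hlw (h + 1) hre
    omega

lemma commute_swap {α : Type*} [DecidableEq α] {a b c d : α}
    (h1 : a ≠ c) (h2 : a ≠ d) (h3 : b ≠ c) (h4 : b ≠ d) :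
    Commute (Equiv.swap a b) (Equiv.swap c d) := by
  have hdisj : (Equiv.swap a b).Disjoint (Equiv.swap c d) := by
    intro x
    by_cases hxa : x = a
    · subst hxa
      right
      exact Equiv.swap_apply_of_ne_of_ne h1 h2
    · by_cases hxb : x = b
      · subst hxb
        right
        exact Equiv.swap_apply_of_ne_of_ne h3 h4
      · left
        exact Equiv.swap_apply_of_ne_of_ne hxa hxb
  exact hdisj.commute

lemma sq_one_of_commute {G : Type*} [Group G] {s t : G} (hc : Commute s t)
    (hs : s * s = 1) (ht : t * t = 1) : (s * t) ^ 2 = 1 := by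
  calc (s * t) ^ 2 = s * t * (s * t) := pow_two _
    _ = s * t * (t * s) := by rw [hc.eq]
    _ = s * (t * (t * s)) := by rw [mul_assoc]
    _ = s * (t * t * s) := by rw [mul_assoc]
    _ = s * s := by rw [ht, one_mul]
    _ = 1 := hs

lemma gg_string (r h : ℕ) (i j : Fin r) (hij : (i : ℕ) + 2 ≤ (j : ℕ)) :
    (gg r h i * gg r h j) ^ 2 = 1 := by
  have hσ : ((gg r h i).1 * (gg r h j).1) ^ 2 = 1 := by
    have hcomm : Commute (gg r h i).1 (gg r h j).1 := by
      simp only [gg]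
      by_cases hi : (i : ℕ) + 1 ≤ h
      · by_cases hj : (j : ℕ) + 1 ≤ h
        · rw [dif_pos hi, dif_pos hj]
          exact commute_swap
            (Fin.ne_of_val_ne (by simp only [Fin.val_mk]; omega))
            (Fin.ne_of_val_ne (by simp only [Fin.val_mk]; omega))
            (Fin.ne_of_val_ne (by simp only [Fin.val_mk]; omega))
            (Fin.ne_of_val_ne (by simp only [Fin.val_mk]; omega))
        · rw [dif_neg hj]
          exact Commute.one_right _
      · rw [dif_neg hi]
        exact Commute.one_left _
    have hs1 : (gg r h i).1 * (gg r h i).1 = 1 := by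
      simp only [gg]
      by_cases hi : (i : ℕ) + 1 ≤ h
      · rw [dif_pos hi]; exact Equiv.swap_mul_self _ _
      · rw [dif_neg hi]; exact one_mul 1
    have hs2 : (gg r h j).1 * (gg r h j).1 = 1 := by
      simp only [gg]
      by_cases hj : (j : ℕ) + 1 ≤ h
      · rw [dif_pos hj]; exact Equiv.swap_mul_self _ _
      · rw [dif_neg hj]; exact one_mul 1
    exact sq_one_of_commute hcomm hs1 hs2
  have hτ : ((gg r h i).2 * (gg r h j).2) ^ 2 = 1 := by
    have hcomm : Commute (gg r h i).2 (gg r h j).2 := by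
      simp only [gg]
      exact commute_swap
        (Fin.ne_of_val_ne (by simp only [Fin.val_mk]; omega))
        (Fin.ne_of_val_ne (by simp only [Fin.val_mk]; omega))
        (Fin.ne_of_val_ne (by simp only [Fin.val_mk]; omega))
        (Fin.ne_of_val_ne (by simp only [Fin.val_mk]; omega))
    exact sq_one_of_commute hcomm (Equiv.swap_mul_self _ _) (Equiv.swap_mul_self _ _)
  refine Prod.ext ?_ ?_
  · simpa only [Prod.pow_fst, Prod.fst_mul, Prod.fst_one] using hσ
  · simpa only [Prod.pow_snd, Prod.snd_mul, Prod.snd_one] using hτ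

end SCG

/-- Lemma "result1": the CPR graph for `S_{h+1} × S_{r+1}` — a doubled initial path
followed by a tail on the second summand — satisfies the string and intersection
properties, and generates the subgroup of permutations preserving each summand. -/
theorem Sh1_times_Sr1_is_string_C_group
    (r h : ℕ) (hr : 2 ≤ r) (h1 : 1 ≤ h) (h2 : h ≤ r - 1)
    (ρ : Fin r → Equiv.Perm (Fin (h + 1) ⊕ Fin (r + 1)))
    (hlow : ∀ l : Fin r, ∀ hl : (l : ℕ) + 1 ≤ h,
      ρ l = Equiv.swap (inl ⟨(l : ℕ), by omega⟩) (inl ⟨(l : ℕ) + 1, by omega⟩) *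
        Equiv.swap (inr ⟨(l : ℕ), by omega⟩) (inr ⟨(l : ℕ) + 1, by omega⟩))
    (hhigh : ∀ l : Fin r, ∀ hl : h ≤ (l : ℕ),
      ρ l = Equiv.swap (inr ⟨(l : ℕ), by omega⟩) (inr ⟨(l : ℕ) + 1, by omega⟩)) :
    (∀ i j : Fin r, (i : ℕ) + 2 ≤ (j : ℕ) ∨ (j : ℕ) + 2 ≤ (i : ℕ) →
      (ρ i * ρ j) ^ 2 = 1) ∧
    (∀ I J : Set (Fin r),
      Subgroup.closure (ρ '' I) ⊓ Subgroup.closure (ρ '' J) =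
        Subgroup.closure (ρ '' (I ∩ J))) ∧
    Subgroup.closure (Set.range ρ) =
      (Equiv.Perm.sumCongrHom (Fin (h + 1)) (Fin (r + 1))).range := by
  have hh : h + 1 ≤ r := by omega
  set F := Equiv.Perm.sumCongrHom (Fin (h + 1)) (Fin (r + 1)) with hF
  have hρ : ∀ l : Fin r, ρ l = F (SCG.gg r h l) := by
    intro l
    by_cases hl : (l : ℕ) + 1 ≤ h
    · rw [hlow l hl]
      simp only [SCG.gg, dif_pos hl, hF, Equiv.Perm.sumCongrHom_apply]
      rw [← Equiv.Perm.sumCongr_swap_one, ← Equiv.Perm.sumCongr_one_swap,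
        Equiv.Perm.sumCongr_mul, mul_one, one_mul]
    · push_neg at hl
      rw [hhigh l (by omega)]
      simp only [SCG.gg, dif_neg (by omega : ¬((l : ℕ) + 1 ≤ h)), hF,
        Equiv.Perm.sumCongrHom_apply]
      rw [← Equiv.Perm.sumCongr_one_swap]
  have hcl : ∀ S : Set (Fin r), Subgroup.closure (ρ '' S) =
      Subgroup.map F (Subgroup.closure (SCG.gg r h '' S)) := by
    intro S
    have himg : ρ '' S = ⇑F '' (SCG.gg r h '' S) := by
      rw [Set.image_image]
      exact Set.image_congr fun l _ => hρ l
    rw [himg, ← MonoidHom.map_closure]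
  refine ⟨?_, ?_, ?_⟩
  · intro i j hij
    have key : ∀ i j : Fin r, (i : ℕ) + 2 ≤ (j : ℕ) → (ρ i * ρ j) ^ 2 = 1 := by
      intro i j hij
      rw [hρ i, hρ j, ← map_mul, ← map_pow, SCG.gg_string r h i j hij, map_one]
    rcases hij with hij | hij
    · exact key i j hij
    · have hji := key j i hij
      have hc : (ρ i * ρ j) ^ 2 = ρ i * (ρ j * ρ i) ^ 2 * (ρ i)⁻¹ := by
        rw [← conj_pow]
        congr 1
        group
      rw [hc, hji, mul_one, mul_inv_cancel]
  · intro I J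
    rw [hcl, hcl, hcl, ← Subgroup.map_inf _ _ F Equiv.Perm.sumCongrHom_injective]
    congr 1
    apply le_antisymm
    · calc Subgroup.closure (SCG.gg r h '' I) ⊓ Subgroup.closure (SCG.gg r h '' J) ≤
          SCG.SQ r h hh I ⊓ SCG.SQ r h hh J :=
            inf_le_inf (SCG.closure_le_SQ r h hh I) (SCG.closure_le_SQ r h hh J)
        _ ≤ SCG.SQ r h hh (I ∩ J) := SCG.SQ_inter r h hh I J
        _ ≤ Subgroup.closure (SCG.gg r h '' (I ∩ J)) := SCG.SQ_le_closure r h hh (I ∩ J)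
    · exact le_inf
        (Subgroup.closure_mono (Set.image_mono Set.inter_subset_left))
        (Subgroup.closure_mono (Set.image_mono Set.inter_subset_right))
  · rw [← Set.image_univ, hcl]
    have htop : Subgroup.closure (SCG.gg r h '' Set.univ) = ⊤ := by
      apply le_antisymm le_top
      intro p _
      exact SCG.SQ_le_closure r h hh _ (SCG.SQ_univ_mem r h hh p)
    rw [htop, ← MonoidHom.range_eq_map]
end
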